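/- arXiv:2201.12874 — 7 statements merged into one kernel-verified Lean document; each statement's English description precedes it below -/
import Mathlib

section
/- Let A, A' ∈ ℝ^{n×n} be symmetric matrices with A positive semidefinite, and let ε > 0. If (1 − ε)A ⪯ A' ⪯ (1 + ε)A in the Loewner order (i.e. A' − (1−ε)A and (1+ε)A − A' are positive semidefinite), then for every p ∈ [1, ∞], ‖A' − A‖_{S_p} ≤ ε‖A‖_{S_p}. -/
open scoped BigOperators ENNReal
open Matrix

/-- Number of nonzero entries of a vector. -/
noncomputable def nnzv {n : ℕ} (x : Fin n → ℝ) : ℕ :=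
  (Finset.univ.filter fun i => x i ≠ 0).card

/-- The ℓ_p norm of a vector, for a real exponent `p`. -/
noncomputable def lpNorm {n : ℕ} (p : ℝ) (x : Fin n → ℝ) : ℝ :=
  (∑ i, |x i| ^ p) ^ (1 / p)

/-- `IsHead x c y` : `y` is obtained from `x` by keeping (at most) `c` entries that are
largest in absolute value (exactly `min c n` of them, ties broken arbitrarily) and zeroing out the rest. -/
def IsHead {n : ℕ} (x : Fin n → ℝ) (c : ℕ) (y : Fin n → ℝ) : Prop :=
  ∃ T : Finset (Fin n), T.card = min c n ∧ (∀ i ∈ T, y i = x i) ∧ (∀ i ∉ T, y i = 0) ∧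
    ∀ i ∈ T, ∀ j ∉ T, |x j| ≤ |x i|

/-- The singular values of a real matrix: square roots of the eigenvalues of `Aᵀ * A`. -/
noncomputable def singVals {m n : Type*} [Fintype m] [Fintype n] [DecidableEq n]
    (A : Matrix m n ℝ) : n → ℝ :=
  fun j => Real.sqrt ((Matrix.isHermitian_conjTranspose_mul_self A).eigenvalues j)

/-- The Schatten p-(quasi)norm of a real matrix, for a real exponent `p > 0`. -/
noncomputable def schattenF {m n : Type*} [Fintype m] [Fintype n] [DecidableEq n]
    (p : ℝ) (A : Matrix m n ℝ) : ℝ :=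
  (∑ j, singVals A j ^ p) ^ (1 / p)

/-- The spectral norm (Schatten ∞-norm): the largest singular value. -/
noncomputable def specNorm {m n : Type*} [Fintype m] [Fintype n] [DecidableEq n]
    (A : Matrix m n ℝ) : ℝ :=
  ⨆ j, singVals A j

open Classical in
/-- The Schatten p-norm with exponent `p ∈ (0,∞]`. -/
noncomputable def schattenE {m n : Type*} [Fintype m] [Fintype n] [DecidableEq n]
    (p : ℝ≥0∞) (A : Matrix m n ℝ) : ℝ :=
  if p = ⊤ then specNorm A else schattenF p.toReal A

/-- Number of nonzero entries of a matrix. -/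
noncomputable def nnz {m n : Type*} [Fintype m] [Fintype n] (A : Matrix m n ℝ) : ℕ :=
  (Finset.univ.filter fun ij : m × n => A ij.1 ij.2 ≠ 0).card

section Aux
open Polynomial

lemma charpoly_eq_of_eigenvecs {n : ℕ} (M : Matrix (Fin n) (Fin n) ℝ)
    (u : Fin n → (Fin n → ℝ)) (c : Fin n → ℝ)
    (horth : ∀ i j, u i ⬝ᵥ u j = if i = j then (1:ℝ) else 0)
    (heig : ∀ i, M *ᵥ u i = c i • u i) :
    M.charpoly = ((Finset.univ.val.map c).map fun r => (X : ℝ[X]) - C r).prod := by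
  classical
  set U : Matrix (Fin n) (Fin n) ℝ := Matrix.of fun k i => u i k with hU
  have hUtU : Uᵀ * U = 1 := by
    ext i j
    simpa [Matrix.mul_apply, hU, Matrix.one_apply, dotProduct] using horth i j
  have hUUt : U * Uᵀ = 1 := mul_eq_one_comm.mp hUtU
  have hMU : M * U = U * Matrix.diagonal c := by
    ext k i
    have h := congrFun (heig i) k
    simp only [Matrix.mulVec, dotProduct, Pi.smul_apply, smul_eq_mul] at h
    rw [Matrix.mul_apply, Matrix.mul_diagonal]
    simpa [hU, mul_comm] using h
  have hM : M = U * Matrix.diagonal c * Uᵀ := by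
    calc M = M * (U * Uᵀ) := by rw [hUUt, Matrix.mul_one]
    _ = (M * U) * Uᵀ := by rw [Matrix.mul_assoc]
    _ = U * Matrix.diagonal c * Uᵀ := by rw [hMU]
  have hmUUt : (U.map (C : ℝ →+* ℝ[X])) * (Uᵀ.map (C : ℝ →+* ℝ[X])) = 1 := by
    rw [← Matrix.map_mul, hUUt, Matrix.map_one _ (map_zero _) (map_one _)]
  have h1 : charmatrix M
      = (U.map (C : ℝ →+* ℝ[X])) * charmatrix (Matrix.diagonal c) * (Uᵀ.map (C : ℝ →+* ℝ[X])) := by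
    have hcomm : (U.map (C : ℝ →+* ℝ[X])) * Matrix.scalar (Fin n) (X : ℝ[X])
        = Matrix.scalar (Fin n) (X : ℝ[X]) * U.map (C : ℝ →+* ℝ[X]) :=
      (Matrix.scalar_commute (X : ℝ[X]) (Commute.all _) _).eq.symm
    have hsc : Matrix.scalar (Fin n) (X : ℝ[X])
        = (U.map (C : ℝ →+* ℝ[X])) * Matrix.scalar (Fin n) (X : ℝ[X]) * (Uᵀ.map (C : ℝ →+* ℝ[X])) := by
      rw [hcomm, Matrix.mul_assoc, hmUUt, Matrix.mul_one]
    calc charmatrix M = Matrix.scalar (Fin n) (X : ℝ[X]) - (C : ℝ →+* ℝ[X]).mapMatrix M := rfl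
    _ = (U.map (C : ℝ →+* ℝ[X])) * Matrix.scalar (Fin n) (X : ℝ[X]) * (Uᵀ.map (C : ℝ →+* ℝ[X]))
        - (U.map (C : ℝ →+* ℝ[X])) * ((Matrix.diagonal c).map (C : ℝ →+* ℝ[X])) * (Uᵀ.map (C : ℝ →+* ℝ[X])) := by
        rw [← hsc, RingHom.mapMatrix_apply, hM, Matrix.map_mul, Matrix.map_mul]
    _ = (U.map (C : ℝ →+* ℝ[X])) * (Matrix.scalar (Fin n) (X : ℝ[X]) - (Matrix.diagonal c).map (C : ℝ →+* ℝ[X])) * (Uᵀ.map (C : ℝ →+* ℝ[X])) := by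
        rw [Matrix.mul_sub, Matrix.sub_mul]
    _ = _ := by rw [charmatrix]; rfl
  have hkey : M.charpoly = (Matrix.diagonal c).charpoly := by
    rw [Matrix.charpoly, Matrix.charpoly, h1, Matrix.det_mul, Matrix.det_mul]
    have hd : (U.map (C : ℝ →+* ℝ[X])).det * (Uᵀ.map (C : ℝ →+* ℝ[X])).det = 1 := by
      rw [← Matrix.det_mul, hmUUt, Matrix.det_one]
    calc (U.map (C : ℝ →+* ℝ[X])).det * (charmatrix (Matrix.diagonal c)).det * (Uᵀ.map (C : ℝ →+* ℝ[X])).det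
        = ((U.map (C : ℝ →+* ℝ[X])).det * (Uᵀ.map (C : ℝ →+* ℝ[X])).det) * (charmatrix (Matrix.diagonal c)).det := by ring
    _ = _ := by rw [hd, one_mul]
  have hdiag : charmatrix (Matrix.diagonal c) = Matrix.diagonal (fun i => (X : ℝ[X]) - C (c i)) := by
    refine Matrix.ext fun i j => ?_
    by_cases h : i = j
    · subst h; rw [charmatrix_apply_eq]; simp
    · rw [charmatrix_apply_ne _ _ _ h, Matrix.diagonal_apply_ne _ h, Matrix.diagonal_apply_ne _ h]
      simp
  rw [hkey, Matrix.charpoly, hdiag, Matrix.det_diagonal, Multiset.map_map]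
  rw [Finset.prod_eq_multiset_prod]
  rfl

lemma inner_eq_dot {n : ℕ} (x y : EuclideanSpace ℝ (Fin n)) :
    (inner ℝ x y : ℝ) = (x : Fin n → ℝ) ⬝ᵥ (y : Fin n → ℝ) := by
  simp [PiLp.inner_apply, dotProduct, mul_comm]

lemma basis_orth {n : ℕ} {M : Matrix (Fin n) (Fin n) ℝ} (hM : M.IsHermitian) :
    ∀ i j, ⇑(hM.eigenvectorBasis i) ⬝ᵥ ⇑(hM.eigenvectorBasis j) = if i = j then (1:ℝ) else 0 := by
  intro i j
  have h := orthonormal_iff_ite.mp hM.eigenvectorBasis.orthonormal i j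
  rw [inner_eq_dot] at h
  simpa using h

lemma eig_multiset {n : ℕ} {M : Matrix (Fin n) (Fin n) ℝ} (hM : M.IsHermitian)
    (u : Fin n → (Fin n → ℝ)) (c : Fin n → ℝ)
    (horth : ∀ i j, u i ⬝ᵥ u j = if i = j then (1:ℝ) else 0)
    (heig : ∀ i, M *ᵥ u i = c i • u i) :
    Finset.univ.val.map hM.eigenvalues = Finset.univ.val.map c := by
  have h2 := charpoly_eq_of_eigenvecs M u c horth heig
  have h1 := charpoly_eq_of_eigenvecs M (fun i => ⇑(hM.eigenvectorBasis i)) hM.eigenvalues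
    (basis_orth hM) (fun i => hM.mulVec_eigenvectorBasis i)
  have h3 := congrArg Polynomial.roots (h1.symm.trans h2)
  rwa [Polynomial.roots_multiset_prod_X_sub_C, Polynomial.roots_multiset_prod_X_sub_C] at h3

lemma sum_eig {n : ℕ} {M : Matrix (Fin n) (Fin n) ℝ} (hM : M.IsHermitian)
    (u : Fin n → (Fin n → ℝ)) (c : Fin n → ℝ)
    (horth : ∀ i j, u i ⬝ᵥ u j = if i = j then (1:ℝ) else 0)
    (heig : ∀ i, M *ᵥ u i = c i • u i) (g : ℝ → ℝ) :
    ∑ j, g (hM.eigenvalues j) = ∑ i, g (c i) := by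
  have h := eig_multiset hM u c horth heig
  calc ∑ j, g (hM.eigenvalues j)
      = ((Finset.univ.val.map hM.eigenvalues).map g).sum := by rw [Multiset.map_map]; rfl
  _ = ((Finset.univ.val.map c).map g).sum := by rw [h]
  _ = _ := by rw [Multiset.map_map]; rfl

lemma eig_mem {n : ℕ} {M : Matrix (Fin n) (Fin n) ℝ} (hM : M.IsHermitian)
    (u : Fin n → (Fin n → ℝ)) (c : Fin n → ℝ)
    (horth : ∀ i j, u i ⬝ᵥ u j = if i = j then (1:ℝ) else 0)
    (heig : ∀ i, M *ᵥ u i = c i • u i) :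
    (∀ j, ∃ i, hM.eigenvalues j = c i) ∧ (∀ i, ∃ j, c i = hM.eigenvalues j) := by
  have h := eig_multiset hM u c horth heig
  constructor
  · intro j
    have hmem : hM.eigenvalues j ∈ Finset.univ.val.map hM.eigenvalues :=
      Multiset.mem_map_of_mem _ (Finset.mem_val.mpr (Finset.mem_univ j))
    rw [h] at hmem
    obtain ⟨i, -, hi⟩ := Multiset.mem_map.mp hmem
    exact ⟨i, hi.symm⟩
  · intro i
    have hmem : c i ∈ Finset.univ.val.map c :=
      Multiset.mem_map_of_mem _ (Finset.mem_val.mpr (Finset.mem_univ i))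
    rw [← h] at hmem
    obtain ⟨j, -, hj⟩ := Multiset.mem_map.mp hmem
    exact ⟨j, hj.symm⟩

lemma isHermitian_of_isSymm {n : ℕ} {M : Matrix (Fin n) (Fin n) ℝ} (h : M.IsSymm) :
    M.IsHermitian := by
  rwa [Matrix.IsHermitian, Matrix.conjTranspose_eq_transpose_of_trivial]

lemma sq_eig_pairs {n : ℕ} {M : Matrix (Fin n) (Fin n) ℝ} (hMs : M.IsSymm)
    (hM : M.IsHermitian) :
    ∀ i, (Mᵀ * M) *ᵥ ⇑(hM.eigenvectorBasis i) = (hM.eigenvalues i ^ 2) • ⇑(hM.eigenvectorBasis i) := by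
  intro i
  rw [hMs, ← Matrix.mulVec_mulVec, hM.mulVec_eigenvectorBasis, Matrix.mulVec_smul,
    hM.mulVec_eigenvectorBasis, smul_smul, sq]

end Aux

section Aux2

lemma sum_g_singVals {n : ℕ} {M : Matrix (Fin n) (Fin n) ℝ} (hMs : M.IsSymm)
    (hM : M.IsHermitian) (g : ℝ → ℝ) :
    ∑ j, g (singVals M j) = ∑ i, g |hM.eigenvalues i| := by
  have h := sum_eig (Matrix.isHermitian_conjTranspose_mul_self M)
    (fun i => ⇑(hM.eigenvectorBasis i)) (fun i => hM.eigenvalues i ^ 2)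
    (basis_orth hM) (sq_eig_pairs hMs hM) (fun t => g (Real.sqrt t))
  simpa [singVals, Real.sqrt_sq_eq_abs] using h

lemma singVals_surj {n : ℕ} {M : Matrix (Fin n) (Fin n) ℝ} (hMs : M.IsSymm)
    (hM : M.IsHermitian) :
    ∀ j, ∃ i, singVals M j = |hM.eigenvalues i| := by
  intro j
  obtain ⟨i, hi⟩ := (eig_mem (Matrix.isHermitian_conjTranspose_mul_self M)
    (fun i => ⇑(hM.eigenvectorBasis i)) (fun i => hM.eigenvalues i ^ 2)
    (basis_orth hM) (sq_eig_pairs hMs hM)).1 j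
  exact ⟨i, by rw [singVals, hi, Real.sqrt_sq_eq_abs]⟩

lemma singVals_cover {n : ℕ} {M : Matrix (Fin n) (Fin n) ℝ} (hMs : M.IsSymm)
    (hM : M.IsHermitian) :
    ∀ i, ∃ j, |hM.eigenvalues i| = singVals M j := by
  intro i
  obtain ⟨j, hj⟩ := (eig_mem (Matrix.isHermitian_conjTranspose_mul_self M)
    (fun i => ⇑(hM.eigenvectorBasis i)) (fun i => hM.eigenvalues i ^ 2)
    (basis_orth hM) (sq_eig_pairs hMs hM)).2 i
  exact ⟨j, by rw [singVals, ← hj, Real.sqrt_sq_eq_abs]⟩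

end Aux2

/-- an `ε`-spectral approximation of a PSD matrix is an `(ε, S_p)`-norm
approximation simultaneously for all `p ∈ [1, ∞]`. -/
theorem stmt3 (n : ℕ) (A A' : Matrix (Fin n) (Fin n) ℝ)
    (hA : A.PosSemidef) (hAs : A.IsSymm) (hA's : A'.IsSymm) (ε : ℝ) (hε : 0 < ε)
    (h1 : (A' - (1 - ε) • A).PosSemidef) (h2 : ((1 + ε) • A - A').PosSemidef) :
    ∀ p : ℝ≥0∞, 1 ≤ p → schattenE p (A' - A) ≤ ε * schattenE p A := by
  intro p hp
  classical
  have hE : (A' - A).IsSymm := hA's.sub hAs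
  have hEh : (A' - A).IsHermitian := isHermitian_of_isSymm hE
  have hAh : A.IsHermitian := hA.1
  set u : Fin n → (Fin n → ℝ) := fun i => ⇑(hEh.eigenvectorBasis i) with hu
  set η : Fin n → ℝ := hEh.eigenvalues with hηdef
  set v : Fin n → (Fin n → ℝ) := fun j => ⇑(hAh.eigenvectorBasis j) with hv
  set β : Fin n → ℝ := hAh.eigenvalues with hβdef
  have hβ0 : ∀ j, 0 ≤ β j := fun j => hA.eigenvalues_nonneg j
  set S : Fin n → Fin n → ℝ := fun i j => (v j ⬝ᵥ u i) ^ 2 with hSdef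
  have hS0 : ∀ i j, 0 ≤ S i j := fun i j => sq_nonneg _
  have hexp : ∀ x y : Fin n → ℝ, x ⬝ᵥ y = ∑ j, (v j ⬝ᵥ x) * (v j ⬝ᵥ y) := by
    intro x y
    have h := (hAh.eigenvectorBasis.sum_inner_mul_inner (WithLp.toLp 2 x) (WithLp.toLp 2 y)).symm
    simp only [inner_eq_dot, WithLp.ofLp_toLp] at h
    rw [h]
    exact Finset.sum_congr rfl fun j _ => by rw [dotProduct_comm x]
  have hexpu : ∀ x y : Fin n → ℝ, x ⬝ᵥ y = ∑ i, (u i ⬝ᵥ x) * (u i ⬝ᵥ y) := by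
    intro x y
    have h := (hEh.eigenvectorBasis.sum_inner_mul_inner (WithLp.toLp 2 x) (WithLp.toLp 2 y)).symm
    simp only [inner_eq_dot, WithLp.ofLp_toLp] at h
    rw [h]
    exact Finset.sum_congr rfl fun i _ => by rw [dotProduct_comm x]
  have hrow : ∀ i, ∑ j, S i j = 1 := by
    intro i
    have h1 : u i ⬝ᵥ u i = 1 := by simpa using basis_orth hEh i i
    calc ∑ j, S i j = ∑ j, (v j ⬝ᵥ u i) * (v j ⬝ᵥ u i) := by
          simp only [hSdef, sq]
    _ = u i ⬝ᵥ u i := (hexp (u i) (u i)).symm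
    _ = 1 := h1
  have hcol : ∀ j, ∑ i, S i j = 1 := by
    intro j
    have h1 : v j ⬝ᵥ v j = 1 := by simpa using basis_orth hAh j j
    calc ∑ i, S i j = ∑ i, (u i ⬝ᵥ v j) * (u i ⬝ᵥ v j) := by
          simp only [hSdef, sq]
          exact Finset.sum_congr rfl fun i _ => by rw [dotProduct_comm]
    _ = v j ⬝ᵥ v j := (hexpu (v j) (v j)).symm
    _ = 1 := h1
  have hform : ∀ i : Fin n, u i ⬝ᵥ (A *ᵥ u i) = ∑ j, S i j * β j := by
    intro i
    calc u i ⬝ᵥ (A *ᵥ u i) = ∑ j, (v j ⬝ᵥ u i) * (v j ⬝ᵥ (A *ᵥ u i)) :=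
          hexp (u i) (A *ᵥ u i)
    _ = ∑ j, S i j * β j := by
        refine Finset.sum_congr rfl fun j _ => ?_
        have hAv : v j ⬝ᵥ (A *ᵥ u i) = β j * (v j ⬝ᵥ u i) := by
          rw [Matrix.dotProduct_mulVec, ← Matrix.mulVec_transpose, hAs,
            hAh.mulVec_eigenvectorBasis, smul_dotProduct, smul_eq_mul]
        rw [hAv, hSdef]; ring
  have hPSD : ∀ x : Fin n → ℝ, |x ⬝ᵥ ((A' - A) *ᵥ x)| ≤ ε * (x ⬝ᵥ (A *ᵥ x)) := by
    intro x
    have e1 : A' - (1 - ε) • A = (A' - A) + ε • A := by module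
    have e2 : (1 + ε) • A - A' = ε • A - (A' - A) := by module
    have p1 := h1.dotProduct_mulVec_nonneg x
    have p2 := h2.dotProduct_mulVec_nonneg x
    rw [e1] at p1
    rw [e2] at p2
    simp only [Matrix.add_mulVec, Matrix.sub_mulVec, Matrix.smul_mulVec,
      dotProduct_add, dotProduct_sub, dotProduct_smul, smul_eq_mul, star_trivial] at p1 p2
    rw [Matrix.sub_mulVec, dotProduct_sub, abs_le]
    constructor <;> linarith
  have hkey : ∀ i, |η i| ≤ ∑ j, S i j * (ε * β j) := by
    intro i
    have h0 : u i ⬝ᵥ ((A' - A) *ᵥ u i) = η i := by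
      rw [hu]
      rw [hEh.mulVec_eigenvectorBasis, dotProduct_smul, smul_eq_mul]
      have h1 : u i ⬝ᵥ u i = 1 := by simpa using basis_orth hEh i i
      rw [hu] at h1
      rw [h1, mul_one]
    have hb := hPSD (u i)
    rw [h0, hform i] at hb
    calc |η i| ≤ ε * ∑ j, S i j * β j := hb
    _ = ∑ j, S i j * (ε * β j) := by
        rw [Finset.mul_sum]
        exact Finset.sum_congr rfl fun j _ => by ring
  by_cases hptop : p = ⊤
  · subst hptop
    simp only [schattenE, if_pos rfl]
    rcases isEmpty_or_nonempty (Fin n) with hn | hn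
    · simp [specNorm, Real.iSup_of_isEmpty]
    · have hAspec0 : ∀ j, β j ≤ specNorm A := by
        intro j
        obtain ⟨k, hk⟩ := singVals_cover hAs hAh j
        have hbk : β j = singVals A k := by
          rw [← hk, abs_of_nonneg (hβ0 j)]
        rw [hbk]
        exact le_ciSup (Set.Finite.bddAbove (Set.finite_range _)) k
      have hbound : ∀ jj, singVals (A' - A) jj ≤ ε * specNorm A := by
        intro jj
        obtain ⟨i, hi⟩ := singVals_surj hE hEh jj
        calc singVals (A' - A) jj = |η i| := hi
        _ ≤ ∑ j, S i j * (ε * β j) := hkey i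
        _ ≤ ∑ j, S i j * (ε * specNorm A) := by
            refine Finset.sum_le_sum fun j _ => ?_
            exact mul_le_mul_of_nonneg_left
              (mul_le_mul_of_nonneg_left (hAspec0 j) hε.le) (hS0 i j)
        _ = ε * specNorm A := by rw [← Finset.sum_mul, hrow i, one_mul]
      exact ciSup_le hbound
  · have hq1 : 1 ≤ p.toReal := by
      rw [← ENNReal.toReal_one]
      exact ENNReal.toReal_mono hptop hp
    set q := p.toReal with hqdef
    have hq0 : 0 < q := lt_of_lt_of_le one_pos hq1
    simp only [schattenE, if_neg hptop, schattenF]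
    have hL : ∑ j, singVals (A' - A) j ^ q = ∑ i, |η i| ^ q :=
      sum_g_singVals hE hEh (fun t => t ^ q)
    have hR : ∑ j, singVals A j ^ q = ∑ i, β i ^ q := by
      rw [sum_g_singVals hAs hAh (fun t => t ^ q)]
      exact Finset.sum_congr rfl fun i _ => by rw [abs_of_nonneg (hβ0 i)]
    have hmain : ∑ i, |η i| ^ q ≤ ε ^ q * ∑ j, β j ^ q := by
      calc ∑ i, |η i| ^ q ≤ ∑ i, ∑ j, S i j * (ε * β j) ^ q := by
            refine Finset.sum_le_sum fun i _ => ?_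
            calc |η i| ^ q ≤ (∑ j, S i j * (ε * β j)) ^ q :=
                  Real.rpow_le_rpow (abs_nonneg _) (hkey i) hq0.le
            _ ≤ ∑ j, S i j * (ε * β j) ^ q :=
                  Real.rpow_arith_mean_le_arith_mean_rpow Finset.univ (S i)
                    (fun j => ε * β j) (fun j _ => hS0 i j) (hrow i)
                    (fun j _ => mul_nonneg hε.le (hβ0 j)) hq1
      _ = ∑ j, (ε * β j) ^ q := by
            rw [Finset.sum_comm]
            refine Finset.sum_congr rfl fun j _ => ?_
            rw [← Finset.sum_mul, hcol j, one_mul]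
      _ = ε ^ q * ∑ j, β j ^ q := by
            rw [Finset.mul_sum]
            exact Finset.sum_congr rfl fun j _ => by
              rw [Real.mul_rpow hε.le (hβ0 j)]
    rw [hL, hR]
    have hnn : 0 ≤ ∑ i, |η i| ^ q :=
      Finset.sum_nonneg fun i _ => Real.rpow_nonneg (abs_nonneg _) _
    have hb : 0 ≤ ∑ j, β j ^ q :=
      Finset.sum_nonneg fun j _ => Real.rpow_nonneg (hβ0 j) _
    calc (∑ i, |η i| ^ q) ^ (1/q) ≤ (ε ^ q * ∑ j, β j ^ q) ^ (1/q) :=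
          Real.rpow_le_rpow hnn hmain (by positivity)
    _ = ε * (∑ j, β j ^ q) ^ (1/q) := by
        rw [Real.mul_rpow (Real.rpow_nonneg hε.le q) hb, ← Real.rpow_mul hε.le,
          mul_one_div_cancel hq0.ne', Real.rpow_one]
end

section
/- For every a ∈ ℝⁿ, every 1 ≤ p < q ≤ ∞, and every integer 0 < c < n: ‖a_tail(c)‖_q ≤ c^{−(1/p − 1/q)}‖a‖_p, with the convention 1/∞ = 0. -/
open scoped BigOperators ENNReal
open Matrix

/-- The `ℓ_q` norm of a vector for `q ∈ (0, ∞]`. -/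
noncomputable def lqNormE {n : ℕ} (q : ℝ≥0∞) (x : Fin n → ℝ) : ℝ :=
  if q = ⊤ then ⨆ i, |x i| else lpNorm q.toReal x

/-- the tail bound `‖a_tail(c)‖_q ≤ c^{-(1/p - 1/q)} ‖a‖_p` for all
`1 ≤ p < q ≤ ∞` and integers `0 < c < n` (with the convention `1/∞ = 0`;
note `1 / q.toReal = 0` when `q = ⊤` since `(⊤ : ℝ≥0∞).toReal = 0` and `1/0 = 0` in Lean). -/
theorem stmt4 (n : ℕ) (a : Fin n → ℝ) (p : ℝ) (hp : 1 ≤ p) (q : ℝ≥0∞)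
    (hpq : ENNReal.ofReal p < q) (c : ℕ) (hc0 : 0 < c) (hcn : c < n)
    (y : Fin n → ℝ) (hy : IsHead a c y) :
    lqNormE q (a - y) ≤ (c : ℝ) ^ (-(1 / p - 1 / q.toReal)) * lpNorm p a := by
  obtain ⟨T, hTcard, hyT, hyT', hmax⟩ := hy
  have hp0 : (0:ℝ) < p := lt_of_lt_of_le one_pos hp
  have hTcard' : T.card = c := by rw [hTcard, min_eq_left hcn.le]
  have hTne : T.Nonempty := Finset.card_pos.mp (by rw [hTcard']; exact hc0)
  set z := a - y with hz
  have hzT : ∀ i ∈ T, z i = 0 := fun i hi => by simp [hz, hyT i hi]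
  have hzT' : ∀ i ∉ T, z i = a i := fun i hi => by simp [hz, hyT' i hi]
  set M := T.inf' hTne (fun i => |a i|) with hM
  obtain ⟨i₀, hi₀, hMi₀⟩ := Finset.exists_mem_eq_inf' hTne (fun i => |a i|)
  have hMabs : M = |a i₀| := hM.trans hMi₀
  have hM0 : 0 ≤ M := hMabs ▸ abs_nonneg _
  have hzle : ∀ i, |z i| ≤ M := by
    intro i
    by_cases hi : i ∈ T
    · simpa [hzT i hi] using hM0
    · rw [hzT' i hi]
      exact hMabs ▸ hmax i₀ hi₀ i hi
  set S := ∑ i, |a i| ^ p with hS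
  have hS0 : 0 ≤ S := Finset.sum_nonneg fun i _ => Real.rpow_nonneg (abs_nonneg _) _
  have hc0' : (0:ℝ) < c := Nat.cast_pos.mpr hc0
  have hcS : (c:ℝ) * M ^ p ≤ S := by
    calc (c:ℝ) * M ^ p = ∑ _i ∈ T, M ^ p := by
          rw [Finset.sum_const, hTcard', nsmul_eq_mul]
      _ ≤ ∑ i ∈ T, |a i| ^ p := Finset.sum_le_sum fun i hi =>
          Real.rpow_le_rpow hM0 (Finset.inf'_le _ hi) hp0.le
      _ ≤ S := Finset.sum_le_sum_of_subset_of_nonneg (Finset.subset_univ T)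
          (fun i _ _ => Real.rpow_nonneg (abs_nonneg _) _)
  have hlp : lpNorm p a = S ^ (1/p) := rfl
  have hMle : M ≤ (c:ℝ) ^ (-(1/p)) * S ^ (1/p) := by
    have h1 : M ^ p ≤ S / c := (le_div_iff₀ hc0').mpr (by linarith)
    have h2 : (M ^ p) ^ (1/p) ≤ (S / c) ^ (1/p) :=
      Real.rpow_le_rpow (Real.rpow_nonneg hM0 _) h1 (by positivity)
    rwa [← Real.rpow_mul hM0, mul_one_div, div_self hp0.ne', Real.rpow_one,
      Real.div_rpow hS0 hc0'.le, div_eq_mul_inv, ← Real.rpow_neg hc0'.le,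
      mul_comm] at h2
  have hzS : ∑ i, |z i| ^ p ≤ S := by
    refine Finset.sum_le_sum fun i _ => ?_
    by_cases hi : i ∈ T
    · rw [hzT i hi]
      simpa [Real.zero_rpow hp0.ne'] using Real.rpow_nonneg (abs_nonneg (a i)) p
    · rw [hzT' i hi]
  by_cases hq : q = ⊤
  · subst hq
    simp only [lqNormE, if_pos rfl, ENNReal.toReal_top, div_zero, sub_zero]
    have hne : Nonempty (Fin n) := ⟨⟨0, hc0.trans hcn⟩⟩
    rw [hlp]
    exact ciSup_le fun i => (hzle i).trans hMle
  · set r := q.toReal with hr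
    have hpr : p < r := by
      rw [hr]
      exact (ENNReal.ofReal_lt_iff_lt_toReal hp0.le hq).mp hpq
    have hr0 : (0:ℝ) < r := hp0.trans hpr
    simp only [lqNormE, if_neg hq]
    rw [hlp, lpNorm]
    by_cases hSz : S = 0
    · have ha : ∀ i, a i = 0 := by
        intro i
        have hsz : ∑ j : Fin n, |a j| ^ p = 0 := hS ▸ hSz
        have h0 := (Finset.sum_eq_zero_iff_of_nonneg
          (fun j (_ : j ∈ Finset.univ) => Real.rpow_nonneg (abs_nonneg (a j)) p)).mp
          hsz i (Finset.mem_univ i)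
        have := (Real.rpow_eq_zero (abs_nonneg (a i)) hp0.ne').mp h0
        exact abs_eq_zero.mp this
      have hz0 : ∀ i, z i = 0 := by
        intro i
        by_cases hi : i ∈ T
        · exact hzT i hi
        · rw [hzT' i hi]; exact ha i
      simp only [← hr, hz0, abs_zero, Real.zero_rpow hr0.ne', Finset.sum_const,
        smul_zero, Real.zero_rpow (by positivity : (1:ℝ)/r ≠ 0)]
      positivity
    · have hSpos : 0 < S := lt_of_le_of_ne hS0 (Ne.symm hSz)
      have hstep : ∀ i, |z i| ^ r ≤ M ^ (r - p) * |z i| ^ p := by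
        intro i
        rcases eq_or_lt_of_le (abs_nonneg (z i)) with h | h
        · rw [← h, Real.zero_rpow hr0.ne', Real.zero_rpow hp0.ne', mul_zero]
        · calc |z i| ^ r = |z i| ^ (r - p) * |z i| ^ p := by
                  rw [← Real.rpow_add h, sub_add_cancel]
            _ ≤ M ^ (r - p) * |z i| ^ p :=
              mul_le_mul_of_nonneg_right
                (Real.rpow_le_rpow (abs_nonneg _) (hzle i) (by linarith))
                (Real.rpow_nonneg (abs_nonneg _) _)
      have hsum : ∑ i, |z i| ^ r ≤ M ^ (r - p) * S := by
        calc ∑ i, |z i| ^ r ≤ ∑ i, M ^ (r - p) * |z i| ^ p :=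
              Finset.sum_le_sum fun i _ => hstep i
          _ = M ^ (r - p) * ∑ i, |z i| ^ p := by rw [Finset.mul_sum]
          _ ≤ M ^ (r - p) * S :=
              mul_le_mul_of_nonneg_left hzS (Real.rpow_nonneg hM0 _)
      have hid : ((((c:ℝ) ^ (-(1/p)) * S ^ (1/p)) ^ (r - p)) * S) ^ (1/r)
          = (c:ℝ) ^ (-(1/p - 1/r)) * S ^ (1/p) := by
        rw [Real.mul_rpow (Real.rpow_nonneg hc0'.le _) (Real.rpow_nonneg hS0 _),
          mul_assoc,
          Real.mul_rpow (Real.rpow_nonneg (Real.rpow_nonneg hc0'.le _) _)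
            (by positivity),
          Real.mul_rpow (Real.rpow_nonneg (Real.rpow_nonneg hS0 _) _) hS0,
          ← Real.rpow_mul hc0'.le, ← Real.rpow_mul hc0'.le,
          ← Real.rpow_mul hS0, ← Real.rpow_mul hS0,
          ← Real.rpow_add hSpos]
        congr 1
        · congr 1
          field_simp
        · congr 1
          field_simp
          ring
      calc (∑ i, |z i| ^ r) ^ (1/r)
          ≤ (M ^ (r - p) * S) ^ (1/r) :=
            Real.rpow_le_rpow (Finset.sum_nonneg fun i _ =>
              Real.rpow_nonneg (abs_nonneg _) _) hsum (by positivity)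
        _ ≤ ((((c:ℝ) ^ (-(1/p)) * S ^ (1/p)) ^ (r - p)) * S) ^ (1/r) := by
            apply Real.rpow_le_rpow (by positivity) _ (by positivity)
            exact mul_le_mul_of_nonneg_right
              (Real.rpow_le_rpow hM0 hMle (by linarith)) hS0
        _ = (c:ℝ) ^ (-(1/p - 1/r)) * S ^ (1/p) := hid
end

section
/- Let p, q ≥ 1 be reals, let 0 < ε < 1/2, ε₀ > 0, and s ≥ 0, and let A', B ∈ ℝ^{n×n} with A = A' + B. Assume: (i) ‖B‖_{S_p} < ε‖A'‖_{S_p}; (ii) ‖A'‖_{S_q} = ‖B‖_{S_q}; (iii) every B' ∈ ℝ^{n×n} with ‖B' − B‖_{S_q} ≤ 2ε₀‖B‖_{S_q} satisfies nnz(B') ≥ s. Then ‖A − A'‖_{S_p} < 2ε‖A‖_{S_p}, and every Ã ∈ ℝ^{n×n} with ‖A − Ã‖_{S_q} ≤ ε₀‖A‖_{S_q} satisfies nnz(Ã) ≥ s − nnz(A'). -/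
open scoped BigOperators ENNReal
open Matrix

namespace Stmt5Aux

variable {n : ℕ}

/-! ### dot product basics -/

lemma dot_self_nonneg (v : Fin n → ℝ) : 0 ≤ v ⬝ᵥ v :=
  Finset.sum_nonneg fun i _ => mul_self_nonneg _

lemma dot_sum_right {ι : Type*} (y : Fin n → ℝ) (T : Finset ι) (f : ι → Fin n → ℝ) :
    y ⬝ᵥ (∑ i ∈ T, f i) = ∑ i ∈ T, y ⬝ᵥ f i := by
  simp only [dotProduct, Finset.sum_apply, Finset.mul_sum]
  exact Finset.sum_comm

lemma sum_dot_left {ι : Type*} (y : Fin n → ℝ) (T : Finset ι) (f : ι → Fin n → ℝ) :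
    (∑ i ∈ T, f i) ⬝ᵥ y = ∑ i ∈ T, f i ⬝ᵥ y := by
  rw [dotProduct_comm, dot_sum_right]
  exact Finset.sum_congr rfl fun i _ => dotProduct_comm _ _

lemma bessel {ι : Type*} [DecidableEq ι] (T : Finset ι) (w : ι → Fin n → ℝ)
    (hw : ∀ i ∈ T, ∀ j ∈ T, w i ⬝ᵥ w j = if i = j then 1 else 0) (z : Fin n → ℝ) :
    ∑ i ∈ T, (w i ⬝ᵥ z) ^ 2 ≤ z ⬝ᵥ z := by
  have hSd : ∀ y : Fin n → ℝ,
      (∑ i ∈ T, (w i ⬝ᵥ z) • w i) ⬝ᵥ y = ∑ i ∈ T, (w i ⬝ᵥ z) * (w i ⬝ᵥ y) := by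
    intro y
    rw [sum_dot_left]
    exact Finset.sum_congr rfl fun i _ => by rw [smul_dotProduct, smul_eq_mul]
  set S : Fin n → ℝ := ∑ i ∈ T, (w i ⬝ᵥ z) • w i with hS
  have hSz : S ⬝ᵥ z = ∑ i ∈ T, (w i ⬝ᵥ z) ^ 2 := by
    rw [hSd]; exact Finset.sum_congr rfl fun i _ => (sq _).symm
  have hzS : z ⬝ᵥ S = ∑ i ∈ T, (w i ⬝ᵥ z) ^ 2 := by
    rw [dotProduct_comm]; exact hSz
  have hwS : ∀ i ∈ T, w i ⬝ᵥ S = w i ⬝ᵥ z := by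
    intro i hi
    rw [dotProduct_comm, hSd]
    rw [Finset.sum_eq_single i]
    · rw [hw i hi i hi]; simp
    · intro j hj hji
      rw [hw j hj i hi, if_neg hji, mul_zero]
    · intro h; exact absurd hi h
  have hSS : S ⬝ᵥ S = ∑ i ∈ T, (w i ⬝ᵥ z) ^ 2 := by
    rw [hSd]
    exact Finset.sum_congr rfl fun i hi => by rw [hwS i hi, sq]
  have h0 : 0 ≤ (z - S) ⬝ᵥ (z - S) := dot_self_nonneg _
  rw [sub_dotProduct, dotProduct_sub, dotProduct_sub, hSz, hzS, hSS] at h0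
  linarith

/-! ### sorting and top-k sets -/

noncomputable def dperm (x : Fin n → ℝ) : Equiv.Perm (Fin n) := Tuple.sort (fun j => -x j)

lemma dperm_anti (x : Fin n → ℝ) {i j : Fin n} (h : i ≤ j) :
    x (dperm x j) ≤ x (dperm x i) := by
  have := Tuple.monotone_sort (fun j => -x j) h
  simpa [dperm] using this

lemma card_filter_val_lt (k : ℕ) :
    (Finset.univ.filter fun a : Fin n => (a : ℕ) < k).card = min k n := by
  have h : (Finset.univ.filter fun a : Fin n => (a : ℕ) < k) =
      (Finset.range (min k n)).attachFin
        (fun m hm => lt_of_lt_of_le (Finset.mem_range.mp hm) (min_le_right _ _)) := by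
    ext a
    simp only [Finset.mem_filter, Finset.mem_univ, true_and, Finset.mem_attachFin,
      Finset.mem_range, lt_min_iff]
    exact ⟨fun h => ⟨h, a.isLt⟩, fun h => h.1⟩
  rw [h, Finset.card_attachFin, Finset.card_range]

noncomputable def topset (x : Fin n → ℝ) (k : ℕ) : Finset (Fin n) :=
  (Finset.univ.filter fun a : Fin n => (a : ℕ) < k).image (dperm x)

lemma topset_card (x : Fin n → ℝ) (k : ℕ) : (topset x k).card = min k n := by
  rw [topset, Finset.card_image_of_injective _ (Equiv.injective _), card_filter_val_lt]

lemma topset_thresh (x : Fin n → ℝ) (k : ℕ) :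
    ∀ i ∈ topset x k, ∀ j ∉ topset x k, x j ≤ x i := by
  intro i hi j hj
  obtain ⟨a, ha, rfl⟩ := Finset.mem_image.mp hi
  have hak : (a : ℕ) < k := (Finset.mem_filter.mp ha).2
  have hjb : j = dperm x ((dperm x).symm j) := by simp
  have hbk : ¬ ((dperm x).symm j : ℕ) < k := by
    intro hbk
    exact hj (Finset.mem_image.mpr ⟨(dperm x).symm j,
      Finset.mem_filter.mpr ⟨Finset.mem_univ _, hbk⟩, by simp⟩)
  have hab : a ≤ (dperm x).symm j :=
    Fin.le_def.mpr (le_trans (le_of_lt hak) (le_of_not_gt hbk))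
  rw [hjb]
  exact dperm_anti x hab

lemma sum_topset (x : Fin n → ℝ) (k : ℕ) (f : Fin n → ℝ) :
    ∑ i ∈ topset x k, f i
      = ∑ a ∈ Finset.univ.filter (fun a : Fin n => (a : ℕ) < k), f (dperm x a) :=
  Finset.sum_image (fun a _ b _ h => (Equiv.injective _) h)

lemma sum_le_sum_thresh {x : Fin n → ℝ} (hx : ∀ i, 0 ≤ x i) {T S : Finset (Fin n)}
    (hcard : T.card ≤ S.card) (hthr : ∀ i ∈ S, ∀ j ∉ S, x j ≤ x i) :
    ∑ i ∈ T, x i ≤ ∑ i ∈ S, x i := by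
  classical
  have hsplitT := Finset.sum_inter_add_sum_sdiff T S x
  have hsplitS := Finset.sum_inter_add_sum_sdiff S T x
  have hint : T ∩ S = S ∩ T := Finset.inter_comm T S
  rcases Finset.eq_empty_or_nonempty (S \ T) with hST | hST
  · have hsub : S ⊆ T := by rwa [Finset.sdiff_eq_empty_iff_subset] at hST
    have : S = T := Finset.eq_of_subset_of_card_le hsub hcard
    rw [this]
  · obtain ⟨i₀, hi₀, hmin⟩ := Finset.exists_min_image (S \ T) x hST
    have hi₀S : i₀ ∈ S := (Finset.mem_sdiff.mp hi₀).1
    have hdcard : (T \ S).card ≤ (S \ T).card := by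
      have h1 := Finset.card_sdiff_add_card_inter T S
      have h2 := Finset.card_sdiff_add_card_inter S T
      rw [hint] at h1
      omega
    have hTS : ∑ i ∈ T \ S, x i ≤ (T \ S).card • x i₀ :=
      Finset.sum_le_card_nsmul _ _ _ fun j hj =>
        hthr i₀ hi₀S j (Finset.mem_sdiff.mp hj).2
    have hST' : (S \ T).card • x i₀ ≤ ∑ i ∈ S \ T, x i :=
      Finset.card_nsmul_le_sum _ _ _ fun j hj => hmin j hj
    have hsm : (T \ S).card • x i₀ ≤ (S \ T).card • x i₀ := by
      rw [nsmul_eq_mul, nsmul_eq_mul]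
      exact mul_le_mul_of_nonneg_right (Nat.cast_le.mpr hdcard) (hx i₀)
    have hTS' : ∑ i ∈ T \ S, x i ≤ ∑ i ∈ S \ T, x i :=
      le_trans hTS (le_trans hsm hST')
    linarith [hsplitT, hsplitS, hint ▸ hsplitT]

lemma card_le_min {k : ℕ} {T : Finset (Fin n)} (hT : T.card ≤ k) : T.card ≤ min k n :=
  le_min hT (le_trans (Finset.card_le_univ T) (by simp))

lemma sum_le_sum_topset {x : Fin n → ℝ} (hx : ∀ i, 0 ≤ x i) {k : ℕ} {T : Finset (Fin n)}
    (hT : T.card ≤ k) :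
    ∑ i ∈ T, x i ≤ ∑ i ∈ topset x k, x i :=
  sum_le_sum_thresh hx (by rw [topset_card]; exact card_le_min hT) (topset_thresh x k)

lemma weighted_sum_le_topset {x c : Fin n → ℝ} (hx : ∀ i, 0 ≤ x i)
    (hc0 : ∀ i, 0 ≤ c i) (hc1 : ∀ i, c i ≤ 1) {k : ℕ} (hck : ∑ i, c i ≤ (k : ℝ)) :
    ∑ i, x i * c i ≤ ∑ i ∈ topset x k, x i := by
  classical
  rcases Finset.eq_empty_or_nonempty (topset x k) with he | hne
  · have hmin : min k n = 0 := by rw [← topset_card x k, he, Finset.card_empty]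
    rcases Nat.min_eq_zero_iff.mp hmin with hk | hn
    · subst hk
      have hz : ∑ i, c i = 0 := le_antisymm (by simpa using hck)
        (Finset.sum_nonneg fun i _ => hc0 i)
      have hci : ∀ i, c i = 0 := fun i =>
        (Finset.sum_eq_zero_iff_of_nonneg (fun i _ => hc0 i)).mp hz i (Finset.mem_univ i)
      simp [he, hci]
    · rw [he, Finset.sum_empty, Finset.sum_eq_zero]
      intro i _
      exact absurd i.isLt (by omega)
  · obtain ⟨i₀, hi₀, hmin⟩ := Finset.exists_min_image (topset x k) x hne
    have ht0 : 0 ≤ x i₀ := hx i₀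
    have hsumc' : ∑ i, c i ≤ ((topset x k).card : ℝ) := by
      rw [topset_card]
      have h2 : ∑ i, c i ≤ (n : ℝ) := by
        calc ∑ i, c i ≤ ∑ _i : Fin n, (1 : ℝ) := Finset.sum_le_sum fun i _ => hc1 i
        _ = n := by simp
      rcases le_total k n with h | h
      · rw [min_eq_left h]; exact hck
      · rw [min_eq_right h]; exact h2
    have key : ∑ i, x i * c i
        ≤ ∑ i, ((if i ∈ topset x k then (x i - x i₀) else 0) + x i₀ * c i) := by
      refine Finset.sum_le_sum fun i _ => ?_
      by_cases hi : i ∈ topset x k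
      · simp only [hi, if_true]
        have h1 : x i₀ ≤ x i := hmin i hi
        nlinarith [hc0 i, hc1 i]
      · simp only [hi, if_false]
        have h1 : x i ≤ x i₀ := topset_thresh x k i₀ hi₀ i hi
        nlinarith [hc0 i, hx i]
    have hsum1 : ∑ i, ((if i ∈ topset x k then (x i - x i₀) else 0) + x i₀ * c i)
        = ∑ i ∈ topset x k, (x i - x i₀) + x i₀ * ∑ i, c i := by
      rw [Finset.sum_add_distrib, ← Finset.mul_sum]
      congr 1
      rw [Finset.sum_ite_mem, Finset.univ_inter]
    have hsum2 : ∑ i ∈ topset x k, (x i - x i₀)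
        = ∑ i ∈ topset x k, x i - ((topset x k).card : ℝ) * x i₀ := by
      rw [Finset.sum_sub_distrib, Finset.sum_const, nsmul_eq_mul]
    have hlast : x i₀ * ∑ i, c i ≤ ((topset x k).card : ℝ) * x i₀ := by
      rw [mul_comm ((_ : ℝ)) (x i₀)]
      exact mul_le_mul_of_nonneg_left hsumc' ht0
    calc ∑ i, x i * c i ≤ _ := key
      _ = ∑ i ∈ topset x k, (x i - x i₀) + x i₀ * ∑ i, c i := hsum1
      _ ≤ ∑ i ∈ topset x k, x i := by rw [hsum2]; linarith

lemma abel_le (c d : ℕ → ℝ) (hca : ∀ i j, i ≤ j → c j ≤ c i)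
    (hd : ∀ k, ∑ i ∈ Finset.range k, d i ≤ 0) :
    ∀ m, ∑ i ∈ Finset.range m, c i * d i ≤ c m * ∑ i ∈ Finset.range m, d i := by
  intro m
  induction m with
  | zero => simp
  | succ m ih =>
    rw [Finset.sum_range_succ, Finset.sum_range_succ]
    have h1 : c m * (∑ i ∈ Finset.range m, d i + d m)
        ≤ c (m + 1) * (∑ i ∈ Finset.range m, d i + d m) := by
      have := hd (m + 1)
      rw [Finset.sum_range_succ] at this
      exact mul_le_mul_of_nonpos_right (hca m (m + 1) (by omega)) this
    nlinarith [ih]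

lemma abel_nonpos (c d : ℕ → ℝ) (hc0 : ∀ i, 0 ≤ c i) (hca : ∀ i j, i ≤ j → c j ≤ c i)
    (hd : ∀ k, ∑ i ∈ Finset.range k, d i ≤ 0) (m : ℕ) :
    ∑ i ∈ Finset.range m, c i * d i ≤ 0 :=
  le_trans (abel_le c d hca hd m) (mul_nonpos_of_nonneg_of_nonpos (hc0 m) (hd m))

lemma maj_rpow {p : ℝ} (hp : 1 ≤ p) (N : ℕ) (x y : ℕ → ℝ)
    (hx0 : ∀ i, 0 ≤ x i) (hy0 : ∀ i, 0 ≤ y i)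
    (hxa : ∀ i j, i ≤ j → x j ≤ x i)
    (hpre : ∀ k, ∑ i ∈ Finset.range k, x i ≤ ∑ i ∈ Finset.range k, y i) :
    ∑ i ∈ Finset.range N, x i ^ p ≤ ∑ i ∈ Finset.range N, y i ^ p := by
  rcases eq_or_lt_of_le hp with hp1 | hp1
  · have := hpre N
    calc ∑ i ∈ Finset.range N, x i ^ p = ∑ i ∈ Finset.range N, x i := by
          refine Finset.sum_congr rfl fun i _ => ?_
          rw [← hp1, Real.rpow_one]
      _ ≤ ∑ i ∈ Finset.range N, y i := this
      _ = ∑ i ∈ Finset.range N, y i ^ p := by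
          refine Finset.sum_congr rfl fun i _ => ?_
          rw [← hp1, Real.rpow_one]
  · have hpne : p ≠ 0 := by linarith
    have hpm1 : (0:ℝ) < p - 1 := by linarith
    set q : ℝ := p / (p - 1) with hqdef
    have hpq : p.HolderConjugate q := Real.HolderConjugate.conjExponent hp1
    have hq : q.HolderConjugate p := hpq.symm
    set c : ℕ → ℝ := fun i => x i ^ (p - 1) with hcdef
    have hc0 : ∀ i, 0 ≤ c i := fun i => Real.rpow_nonneg (hx0 i) _
    have hca : ∀ i j, i ≤ j → c j ≤ c i := fun i j h =>
      Real.rpow_le_rpow (hx0 j) (hxa i j h) (by linarith)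
    have habel : ∑ i ∈ Finset.range N, c i * (x i - y i) ≤ 0 := by
      refine abel_nonpos c _ hc0 hca (fun k => ?_) N
      rw [Finset.sum_sub_distrib]
      linarith [hpre k]
    have hsplit : ∀ i, x i ^ p = c i * x i := by
      intro i
      rcases eq_or_lt_of_le (hx0 i) with h0 | h0
      · show x i ^ p = x i ^ (p - 1) * x i
        rw [← h0, Real.zero_rpow hpne, Real.zero_rpow (ne_of_gt hpm1), zero_mul]
      · have h := (Real.rpow_add h0 (p - 1) 1)
        rw [Real.rpow_one] at h
        show x i ^ p = x i ^ (p - 1) * x i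
        have hpe : (p - 1) + 1 = p := by ring
        conv_lhs => rw [← hpe]
        exact h
    have hcq : ∀ i, c i ^ q = x i ^ p := by
      intro i
      show (x i ^ (p - 1)) ^ q = x i ^ p
      rw [← Real.rpow_mul (hx0 i)]
      congr 1
      rw [hqdef]
      have hne : p - 1 ≠ 0 := ne_of_gt hpm1
      field_simp
    have hholder : ∑ i ∈ Finset.range N, c i * y i
        ≤ (∑ i ∈ Finset.range N, c i ^ q) ^ (1 / q)
          * (∑ i ∈ Finset.range N, y i ^ p) ^ (1 / p) := by
      have := Real.inner_le_Lp_mul_Lq_of_nonneg (Finset.range N) hq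
        (f := c) (g := y) (fun i _ => hc0 i) (fun i _ => hy0 i)
      exact this
    set X := ∑ i ∈ Finset.range N, x i ^ p with hXdef
    set Y := ∑ i ∈ Finset.range N, y i ^ p with hYdef
    have hX0 : 0 ≤ X := Finset.sum_nonneg fun i _ => Real.rpow_nonneg (hx0 i) _
    have hY0 : 0 ≤ Y := Finset.sum_nonneg fun i _ => Real.rpow_nonneg (hy0 i) _
    have hmain : X ≤ X ^ (1 / q) * Y ^ (1 / p) := by
      have e1 : X = ∑ i ∈ Finset.range N, c i * x i :=
        Finset.sum_congr rfl fun i _ => hsplit i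
      have e2 : ∑ i ∈ Finset.range N, c i * x i
          = ∑ i ∈ Finset.range N, c i * (x i - y i) + ∑ i ∈ Finset.range N, c i * y i := by
        rw [← Finset.sum_add_distrib]
        exact Finset.sum_congr rfl fun i _ => by ring
      have e3 : (∑ i ∈ Finset.range N, c i ^ q) = X :=
        Finset.sum_congr rfl fun i _ => hcq i
      calc X = ∑ i ∈ Finset.range N, c i * x i := e1
        _ = ∑ i ∈ Finset.range N, c i * (x i - y i) + ∑ i ∈ Finset.range N, c i * y i := e2
        _ ≤ ∑ i ∈ Finset.range N, c i * y i := by linarith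
        _ ≤ (∑ i ∈ Finset.range N, c i ^ q) ^ (1 / q) * Y ^ (1 / p) := hholder
        _ = X ^ (1 / q) * Y ^ (1 / p) := by rw [e3]
    rcases eq_or_lt_of_le hX0 with hX | hX
    · rw [← hX]; exact hY0
    · have h1q : 1 / q = 1 - 1 / p := by
        have := hpq.inv_add_inv_eq_one
        rw [one_div, one_div]
        linarith
      have hXsplit : X = X ^ (1 - 1 / p) * X ^ (1 / p) := by
        rw [← Real.rpow_add hX]
        norm_num
      rw [h1q] at hmain
      have hXp : X ^ (1 / p) ≤ Y ^ (1 / p) := by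
        have hpos : 0 < X ^ (1 - 1 / p) := Real.rpow_pos_of_pos hX _
        nth_rewrite 1 [hXsplit] at hmain
        exact le_of_mul_le_mul_left hmain hpos
      calc X = (X ^ (1 / p)) ^ p := by
            rw [← Real.rpow_mul hX0, one_div, inv_mul_cancel₀ hpne, Real.rpow_one]
        _ ≤ (Y ^ (1 / p)) ^ p :=
            Real.rpow_le_rpow (Real.rpow_nonneg hX0 _) hXp (by linarith)
        _ = Y := by rw [← Real.rpow_mul hY0, one_div, inv_mul_cancel₀ hpne, Real.rpow_one]


lemma singVals_nonneg (M : Matrix (Fin n) (Fin n) ℝ) (j : Fin n) : 0 ≤ singVals M j :=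
  Real.sqrt_nonneg _

lemma sq_singVals (M : Matrix (Fin n) (Fin n) ℝ) (j : Fin n) :
    singVals M j ^ 2 = (Matrix.isHermitian_conjTranspose_mul_self M).eigenvalues j :=
  Real.sq_sqrt (Matrix.eigenvalues_conjTranspose_mul_self_nonneg M j)

noncomputable def evec (M : Matrix (Fin n) (Fin n) ℝ) (j : Fin n) : Fin n → ℝ :=
  ⇑((Matrix.isHermitian_conjTranspose_mul_self M).eigenvectorBasis j)

noncomputable def uvec (M : Matrix (Fin n) (Fin n) ℝ) (j : Fin n) : Fin n → ℝ :=
  (singVals M j)⁻¹ • (M *ᵥ evec M j)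

lemma evec_dot (M : Matrix (Fin n) (Fin n) ℝ) (i j : Fin n) :
    evec M i ⬝ᵥ evec M j = if i = j then 1 else 0 := by
  have h := ((Matrix.isHermitian_conjTranspose_mul_self M).eigenvectorBasis).orthonormal
  rw [orthonormal_iff_ite] at h
  have h2 := h i j
  rw [EuclideanSpace.inner_eq_star_dotProduct] at h2
  rw [dotProduct_comm]
  simpa [evec] using h2

lemma evec_expand (M : Matrix (Fin n) (Fin n) ℝ) (b : Fin n → ℝ) :
    b = ∑ j, (evec M j ⬝ᵥ b) • evec M j := by
  have h := ((Matrix.isHermitian_conjTranspose_mul_self M).eigenvectorBasis).sum_repr'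
    ((WithLp.equiv 2 (Fin n → ℝ)).symm b)
  funext k
  have hk := congrArg (WithLp.linearEquiv 2 ℝ (Fin n → ℝ)) h
  rw [map_sum] at hk
  simp only [LinearEquiv.map_smul, WithLp.linearEquiv_apply, Equiv.apply_symm_apply] at hk
  have hk2 := congrFun hk k
  rw [Finset.sum_apply] at hk2
  rw [Finset.sum_apply]
  refine Eq.trans (hk2.symm : b k = _) ?_
  refine Finset.sum_congr rfl fun j _ => ?_
  rw [EuclideanSpace.inner_eq_star_dotProduct]
  simp [evec, dotProduct, mul_comm]

lemma mulVec_expand (M : Matrix (Fin n) (Fin n) ℝ) (b : Fin n → ℝ) :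
    M *ᵥ b = ∑ j, (evec M j ⬝ᵥ b) • (M *ᵥ evec M j) := by
  conv_lhs => rw [evec_expand M b]
  rw [← Matrix.mulVecLin_apply, map_sum]
  simp [Matrix.mulVecLin_apply]

lemma dot_gram (M : Matrix (Fin n) (Fin n) ℝ) (a b : Fin n → ℝ) :
    a ⬝ᵥ ((Mᴴ * M) *ᵥ b) = (M *ᵥ a) ⬝ᵥ (M *ᵥ b) := by
  rw [← Matrix.mulVec_mulVec, Matrix.dotProduct_mulVec, Matrix.vecMul_conjTranspose]
  simp

lemma gram_evec_dot (M : Matrix (Fin n) (Fin n) ℝ) (i j : Fin n) :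
    (M *ᵥ evec M i) ⬝ᵥ (M *ᵥ evec M j) = singVals M j ^ 2 * (if i = j then 1 else 0) := by
  rw [← dot_gram]
  show evec M i ⬝ᵥ ((Mᴴ * M) *ᵥ ⇑((Matrix.isHermitian_conjTranspose_mul_self M).eigenvectorBasis j))
    = _
  rw [(Matrix.isHermitian_conjTranspose_mul_self M).mulVec_eigenvectorBasis j,
    dotProduct_smul, smul_eq_mul, sq_singVals]
  show _ * (evec M i ⬝ᵥ evec M j) = _
  rw [evec_dot]

lemma mulVec_evec (M : Matrix (Fin n) (Fin n) ℝ) (j : Fin n) :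
    M *ᵥ evec M j = singVals M j • uvec M j := by
  by_cases h : singVals M j = 0
  · have h0 : (M *ᵥ evec M j) ⬝ᵥ (M *ᵥ evec M j) = 0 := by
      rw [gram_evec_dot]; simp [h]
    have hz : M *ᵥ evec M j = 0 := dotProduct_self_eq_zero.mp h0
    rw [uvec, hz]; simp
  · rw [uvec, smul_inv_smul₀ h]

lemma uvec_zero {M : Matrix (Fin n) (Fin n) ℝ} {j : Fin n} (h : singVals M j = 0) :
    uvec M j = 0 := by
  rw [uvec, h, _root_.inv_zero, zero_smul]

lemma uvec_dot (M : Matrix (Fin n) (Fin n) ℝ) {i j : Fin n}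
    (hi : singVals M i ≠ 0) (hj : singVals M j ≠ 0) :
    uvec M i ⬝ᵥ uvec M j = if i = j then 1 else 0 := by
  rw [uvec, uvec, smul_dotProduct, dotProduct_smul, gram_evec_dot]
  by_cases h : i = j
  · subst h
    simp only [if_pos rfl, smul_eq_mul, mul_one]
    field_simp
  · simp only [if_neg h, smul_eq_mul, mul_zero]

lemma uvec_dot_self_le_one (M : Matrix (Fin n) (Fin n) ℝ) (j : Fin n) :
    uvec M j ⬝ᵥ uvec M j ≤ 1 := by
  by_cases h : singVals M j = 0
  · rw [uvec_zero h]; simp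
  · rw [uvec_dot M h h, if_pos rfl]

lemma uvec_dot_mulVec (M : Matrix (Fin n) (Fin n) ℝ) (j : Fin n) :
    uvec M j ⬝ᵥ (M *ᵥ evec M j) = singVals M j := by
  rw [uvec, smul_dotProduct, gram_evec_dot, if_pos rfl, smul_eq_mul]
  by_cases h : singVals M j = 0
  · simp [h]
  · field_simp

/-! ### core bound, Ky Fan subadditivity -/

lemma core_bound (M : Matrix (Fin n) (Fin n) ℝ) (k : ℕ) (T : Finset (Fin n)) (hk : T.card ≤ k)
    (a b : Fin n → Fin n → ℝ)
    (ha : ∀ i ∈ T, ∀ j ∈ T, a i ⬝ᵥ a j = if i = j then 1 else 0)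
    (hb : ∀ i ∈ T, ∀ j ∈ T, b i ⬝ᵥ b j = if i = j then 1 else 0) :
    ∑ i ∈ T, a i ⬝ᵥ (M *ᵥ b i) ≤ ∑ j ∈ topset (singVals M) k, singVals M j := by
  classical
  set c : Fin n → ℝ := fun j => ∑ i ∈ T, |evec M j ⬝ᵥ b i| * |a i ⬝ᵥ uvec M j| with hc
  have hterm : ∀ i ∈ T, a i ⬝ᵥ (M *ᵥ b i)
      = ∑ j, singVals M j * ((evec M j ⬝ᵥ b i) * (a i ⬝ᵥ uvec M j)) := by
    intro i _
    conv_lhs => rw [mulVec_expand M (b i)]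
    rw [dot_sum_right]
    refine Finset.sum_congr rfl fun j _ => ?_
    rw [mulVec_evec, dotProduct_smul, dotProduct_smul, smul_eq_mul, smul_eq_mul]
    ring
  have hstep : ∑ i ∈ T, a i ⬝ᵥ (M *ᵥ b i) ≤ ∑ j, singVals M j * c j := by
    rw [Finset.sum_congr rfl hterm, Finset.sum_comm]
    refine Finset.sum_le_sum fun j _ => ?_
    rw [← Finset.mul_sum]
    simp only [hc]
    refine mul_le_mul_of_nonneg_left ?_ (singVals_nonneg M j)
    refine Finset.sum_le_sum fun i _ => ?_
    calc (evec M j ⬝ᵥ b i) * (a i ⬝ᵥ uvec M j)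
        ≤ |(evec M j ⬝ᵥ b i) * (a i ⬝ᵥ uvec M j)| := le_abs_self _
      _ = |evec M j ⬝ᵥ b i| * |a i ⬝ᵥ uvec M j| := abs_mul _ _
  have hc0 : ∀ j, 0 ≤ c j := fun j =>
    Finset.sum_nonneg fun i _ => mul_nonneg (abs_nonneg _) (abs_nonneg _)
  have hb_dot_e : ∀ j, ∑ i ∈ T, |evec M j ⬝ᵥ b i| ^ 2 ≤ 1 := by
    intro j
    have hbess := bessel T b hb (evec M j)
    have h1 : evec M j ⬝ᵥ evec M j = 1 := by rw [evec_dot]; simp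
    calc ∑ i ∈ T, |evec M j ⬝ᵥ b i| ^ 2 = ∑ i ∈ T, (b i ⬝ᵥ evec M j) ^ 2 := by
          refine Finset.sum_congr rfl fun i _ => ?_
          rw [sq_abs, dotProduct_comm]
      _ ≤ evec M j ⬝ᵥ evec M j := hbess
      _ = 1 := h1
  have ha_dot_u : ∀ j, ∑ i ∈ T, |a i ⬝ᵥ uvec M j| ^ 2 ≤ 1 := by
    intro j
    have hbess := bessel T a ha (uvec M j)
    calc ∑ i ∈ T, |a i ⬝ᵥ uvec M j| ^ 2 = ∑ i ∈ T, (a i ⬝ᵥ uvec M j) ^ 2 :=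
          Finset.sum_congr rfl fun i _ => sq_abs _
      _ ≤ uvec M j ⬝ᵥ uvec M j := hbess
      _ ≤ 1 := uvec_dot_self_le_one M j
  have hc1 : ∀ j, c j ≤ 1 := by
    intro j
    have hcs := Finset.sum_mul_sq_le_sq_mul_sq T
      (fun i => |evec M j ⬝ᵥ b i|) (fun i => |a i ⬝ᵥ uvec M j|)
    have h1 := hb_dot_e j
    have h2 := ha_dot_u j
    have hc0j := hc0 j
    have hA0 : (0:ℝ) ≤ ∑ i ∈ T, |evec M j ⬝ᵥ b i| ^ 2 :=
      Finset.sum_nonneg fun i _ => sq_nonneg _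
    have hB0 : (0:ℝ) ≤ ∑ i ∈ T, |a i ⬝ᵥ uvec M j| ^ 2 :=
      Finset.sum_nonneg fun i _ => sq_nonneg _
    nlinarith [hcs, h1, h2, hc0j, hA0, hB0]
  have hck : ∑ j, c j ≤ (T.card : ℝ) := by
    have hswap : ∑ j, c j = ∑ i ∈ T, ∑ j, |evec M j ⬝ᵥ b i| * |a i ⬝ᵥ uvec M j| := by
      simp only [hc]
      exact Finset.sum_comm
    rw [hswap]
    have hone : ∀ i ∈ T, ∑ j, |evec M j ⬝ᵥ b i| * |a i ⬝ᵥ uvec M j| ≤ 1 := by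
      intro i hi
      have hcs := Finset.sum_mul_sq_le_sq_mul_sq Finset.univ
        (fun j => |evec M j ⬝ᵥ b i|) (fun j => |a i ⬝ᵥ uvec M j|)
      have h1 : ∑ j, |evec M j ⬝ᵥ b i| ^ 2 ≤ 1 := by
        have hbess := bessel Finset.univ (evec M)
          (fun x _ y _ => evec_dot M x y) (b i)
        have hb1 : b i ⬝ᵥ b i = 1 := by rw [hb i hi i hi]; simp
        calc ∑ j, |evec M j ⬝ᵥ b i| ^ 2 = ∑ j, (evec M j ⬝ᵥ b i) ^ 2 :=
              Finset.sum_congr rfl fun j _ => sq_abs _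
          _ ≤ b i ⬝ᵥ b i := hbess
          _ = 1 := hb1
      have h2 : ∑ j, |a i ⬝ᵥ uvec M j| ^ 2 ≤ 1 := by
        have hsub : ∑ j, |a i ⬝ᵥ uvec M j| ^ 2
            = ∑ j ∈ Finset.univ.filter (fun j => singVals M j ≠ 0), |a i ⬝ᵥ uvec M j| ^ 2 := by
          refine (Finset.sum_subset (Finset.filter_subset _ _) ?_).symm
          intro j _ hj2
          have hz : singVals M j = 0 := by
            by_contra hne
            exact hj2 (Finset.mem_filter.mpr ⟨Finset.mem_univ _, hne⟩)
          rw [uvec_zero hz]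
          simp
        rw [hsub]
        have hbess := bessel (Finset.univ.filter fun j => singVals M j ≠ 0) (uvec M)
          (fun x hx y hy => uvec_dot M (Finset.mem_filter.mp hx).2 (Finset.mem_filter.mp hy).2)
          (a i)
        have ha1 : a i ⬝ᵥ a i = 1 := by rw [ha i hi i hi]; simp
        calc ∑ j ∈ Finset.univ.filter (fun j => singVals M j ≠ 0), |a i ⬝ᵥ uvec M j| ^ 2
            = ∑ j ∈ Finset.univ.filter (fun j => singVals M j ≠ 0), (uvec M j ⬝ᵥ a i) ^ 2 := by
              refine Finset.sum_congr rfl fun j _ => ?_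
              rw [sq_abs, dotProduct_comm]
          _ ≤ a i ⬝ᵥ a i := hbess
          _ = 1 := ha1
      have hnn : (0:ℝ) ≤ ∑ j, |evec M j ⬝ᵥ b i| * |a i ⬝ᵥ uvec M j| :=
        Finset.sum_nonneg fun j _ => mul_nonneg (abs_nonneg _) (abs_nonneg _)
      have hA0 : (0:ℝ) ≤ ∑ j, |evec M j ⬝ᵥ b i| ^ 2 :=
        Finset.sum_nonneg fun j _ => sq_nonneg _
      have hB0 : (0:ℝ) ≤ ∑ j, |a i ⬝ᵥ uvec M j| ^ 2 :=
        Finset.sum_nonneg fun j _ => sq_nonneg _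
      nlinarith [hcs, h1, h2, hnn, hA0, hB0]
    calc ∑ i ∈ T, ∑ j, |evec M j ⬝ᵥ b i| * |a i ⬝ᵥ uvec M j|
        ≤ ∑ _i ∈ T, (1:ℝ) := Finset.sum_le_sum hone
      _ = T.card := by simp
  have hkk : ∑ j, c j ≤ (k : ℝ) := le_trans hck (by exact_mod_cast hk)
  exact le_trans hstep (weighted_sum_le_topset (singVals_nonneg M) hc0 hc1 hkk)

lemma topsum_triangle (X Y : Matrix (Fin n) (Fin n) ℝ) (k : ℕ) :
    ∑ i ∈ topset (singVals (X + Y)) k, singVals (X + Y) i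
      ≤ ∑ i ∈ topset (singVals X) k, singVals X i
        + ∑ i ∈ topset (singVals Y) k, singVals Y i := by
  classical
  set Tp : Finset (Fin n) := (topset (singVals (X + Y)) k).filter
    (fun i => singVals (X + Y) i ≠ 0) with hT
  have hcard : Tp.card ≤ k :=
    le_trans (Finset.card_filter_le _ _)
      (le_trans (le_of_eq (topset_card _ _)) (min_le_left _ _))
  have hne : ∀ i ∈ Tp, singVals (X + Y) i ≠ 0 := fun i hi => (Finset.mem_filter.mp hi).2
  have horthu : ∀ i ∈ Tp, ∀ j ∈ Tp, uvec (X + Y) i ⬝ᵥ uvec (X + Y) j = if i = j then 1 else 0 :=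
    fun i hi j hj => uvec_dot _ (hne i hi) (hne j hj)
  have horthv : ∀ i ∈ Tp, ∀ j ∈ Tp, evec (X + Y) i ⬝ᵥ evec (X + Y) j = if i = j then 1 else 0 :=
    fun i _ j _ => evec_dot _ i j
  have hsum0 : ∑ i ∈ topset (singVals (X + Y)) k, singVals (X + Y) i
      = ∑ i ∈ Tp, singVals (X + Y) i := (Finset.sum_filter_ne_zero _).symm
  have hsum1 : ∑ i ∈ Tp, singVals (X + Y) i
      = ∑ i ∈ Tp, (uvec (X + Y) i ⬝ᵥ (X *ᵥ evec (X + Y) i)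
          + uvec (X + Y) i ⬝ᵥ (Y *ᵥ evec (X + Y) i)) := by
    refine Finset.sum_congr rfl fun i _ => ?_
    rw [← dotProduct_add, ← Matrix.add_mulVec]
    exact (uvec_dot_mulVec (X + Y) i).symm
  rw [hsum0, hsum1, Finset.sum_add_distrib]
  exact add_le_add
    (core_bound X k Tp hcard (uvec (X + Y)) (evec (X + Y)) horthu horthv)
    (core_bound Y k Tp hcard (uvec (X + Y)) (evec (X + Y)) horthu horthv)

/-! ### descending rearrangement as a sequence on ℕ -/

noncomputable def ds (x : Fin n → ℝ) : ℕ → ℝ :=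
  fun i => if h : i < n then x (dperm x ⟨i, h⟩) else 0

lemma ds_nonneg {x : Fin n → ℝ} (hx : ∀ i, 0 ≤ x i) (i : ℕ) : 0 ≤ ds x i := by
  rw [ds]
  split
  · exact hx _
  · exact le_refl 0

lemma ds_anti {x : Fin n → ℝ} (hx : ∀ i, 0 ≤ x i) : ∀ i j, i ≤ j → ds x j ≤ ds x i := by
  intro i j hij
  by_cases hj : j < n
  · have hi : i < n := lt_of_le_of_lt hij hj
    rw [ds]
    rw [dif_pos hj]
    rw [show ds x i = x (dperm x ⟨i, hi⟩) from dif_pos hi]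
    exact dperm_anti x (show (⟨i, hi⟩ : Fin n) ≤ ⟨j, hj⟩ from hij)
  · rw [show ds x j = 0 from dif_neg hj]
    exact ds_nonneg hx i

lemma ds_prefix (x : Fin n → ℝ) (k : ℕ) :
    ∑ i ∈ Finset.range k, ds x i = ∑ i ∈ topset x k, x i := by
  rw [sum_topset]
  have h1 : ∑ i ∈ Finset.range k, ds x i = ∑ i ∈ Finset.range (min k n), ds x i := by
    refine (Finset.sum_subset (Finset.range_subset_range.mpr (min_le_left _ _)) ?_).symm
    intro i hi hni
    rw [Finset.mem_range] at hi hni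
    have hn : ¬ i < n := by omega
    exact dif_neg hn
  rw [h1]
  refine Finset.sum_bij'
    (fun (i : ℕ) (hi : i ∈ Finset.range (min k n)) =>
      (⟨i, lt_of_lt_of_le (Finset.mem_range.mp hi) (min_le_right _ _)⟩ : Fin n))
    (fun (a : Fin n) (_ : a ∈ Finset.univ.filter fun a : Fin n => (a : ℕ) < k) => (a : ℕ))
    ?_ ?_ ?_ ?_ ?_
  · intro i hi
    simp only [Finset.mem_filter, Finset.mem_univ, true_and]
    exact lt_of_lt_of_le (Finset.mem_range.mp hi) (min_le_left _ _)
  · intro a ha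
    rw [Finset.mem_range, lt_min_iff]
    exact ⟨(Finset.mem_filter.mp ha).2, a.isLt⟩
  · intro i hi
    rfl
  · intro a ha
    exact Fin.eta a a.isLt
  · intro i hi
    have h : i < n := lt_of_lt_of_le (Finset.mem_range.mp hi) (min_le_right _ _)
    rw [show ds x i = x (dperm x ⟨i, h⟩) from dif_pos h]

lemma ds_sum_pow (x : Fin n → ℝ) (p : ℝ) :
    ∑ i ∈ Finset.range n, ds x i ^ p = ∑ j, x j ^ p := by
  rw [← Fin.sum_univ_eq_sum_range (fun i => ds x i ^ p) n]
  refine Eq.trans ?_ (Equiv.sum_comp (dperm x) fun j => x j ^ p)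
  refine Finset.sum_congr rfl fun a _ => ?_
  have h : (a : ℕ) < n := a.isLt
  rw [show ds x (a : ℕ) = x (dperm x ⟨(a : ℕ), h⟩) from dif_pos h, Fin.eta]

/-! ### the triangle inequality for the Schatten p-norm, p ≥ 1 -/

lemma schattenF_nonneg (p : ℝ) (M : Matrix (Fin n) (Fin n) ℝ) : 0 ≤ schattenF p M :=
  Real.rpow_nonneg
    (Finset.sum_nonneg fun j _ => Real.rpow_nonneg (singVals_nonneg M j) _) _

lemma schattenF_triangle {p : ℝ} (hp : 1 ≤ p) (X Y : Matrix (Fin n) (Fin n) ℝ) :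
    schattenF p (X + Y) ≤ schattenF p X + schattenF p Y := by
  have hf0 : ∀ i, 0 ≤ singVals (X + Y) i := singVals_nonneg _
  have hg0 : ∀ i, 0 ≤ singVals X i := singVals_nonneg _
  have hh0 : ∀ i, 0 ≤ singVals Y i := singVals_nonneg _
  have hpre : ∀ k, ∑ i ∈ Finset.range k, ds (singVals (X + Y)) i
      ≤ ∑ i ∈ Finset.range k, (ds (singVals X) i + ds (singVals Y) i) := by
    intro k
    rw [ds_prefix, Finset.sum_add_distrib, ds_prefix, ds_prefix]
    exact topsum_triangle X Y k
  have hmaj := maj_rpow hp n (ds (singVals (X + Y)))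
    (fun i => ds (singVals X) i + ds (singVals Y) i)
    (ds_nonneg hf0)
    (fun i => add_nonneg (ds_nonneg hg0 i) (ds_nonneg hh0 i))
    (ds_anti hf0) hpre
  have hmink := Real.Lp_add_le_of_nonneg (s := Finset.range n)
    (f := ds (singVals X)) (g := ds (singVals Y)) hp
    (fun i _ => ds_nonneg hg0 i) (fun i _ => ds_nonneg hh0 i)
  show (∑ j, singVals (X + Y) j ^ p) ^ (1 / p)
      ≤ (∑ j, singVals X j ^ p) ^ (1 / p) + (∑ j, singVals Y j ^ p) ^ (1 / p)
  rw [← ds_sum_pow (singVals (X + Y)) p, ← ds_sum_pow (singVals X) p,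
    ← ds_sum_pow (singVals Y) p]
  have h1 : (∑ i ∈ Finset.range n, ds (singVals (X + Y)) i ^ p) ^ (1 / p)
      ≤ (∑ i ∈ Finset.range n, (ds (singVals X) i + ds (singVals Y) i) ^ p) ^ (1 / p) :=
    Real.rpow_le_rpow
      (Finset.sum_nonneg fun i _ => Real.rpow_nonneg (ds_nonneg hf0 i) _) hmaj
      (by positivity)
  exact le_trans h1 hmink

/-! ### misc -/

lemma eig_congr {M N : Matrix (Fin n) (Fin n) ℝ} (h : M = N)
    (hM : M.IsHermitian) (hN : N.IsHermitian) : hM.eigenvalues = hN.eigenvalues := by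
  subst h
  rfl

lemma singVals_neg (M : Matrix (Fin n) (Fin n) ℝ) : singVals (-M) = singVals M := by
  funext j
  show Real.sqrt _ = Real.sqrt _
  congr 1
  exact congrFun (eig_congr (by simp) _ _) j

lemma schattenF_neg (p : ℝ) (M : Matrix (Fin n) (Fin n) ℝ) :
    schattenF p (-M) = schattenF p M := by
  show (∑ j, singVals (-M) j ^ p) ^ (1 / p) = _
  rw [singVals_neg]
  rfl

lemma nnz_sub_le (X Y : Matrix (Fin n) (Fin n) ℝ) : nnz (X - Y) ≤ nnz X + nnz Y := by
  unfold nnz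
  refine le_trans (Finset.card_le_card ?_) (Finset.card_union_le _ _)
  intro ij hij
  simp only [Finset.mem_filter, Finset.mem_union, Finset.mem_univ, true_and,
    Matrix.sub_apply] at hij ⊢
  by_contra hcon
  push_neg at hcon
  have h := (Finset.mem_filter.mp hij).2
  exact h (by simp [Matrix.sub_apply, hcon.1, hcon.2])

end Stmt5Aux

/-- the reduction lemma combining properties (P1)-(P4), for `p, q ≥ 1`. -/
theorem stmt5 (p q : ℝ) (hp : 1 ≤ p) (hq : 1 ≤ q) (ε ε₀ s : ℝ)
    (hε0 : 0 < ε) (hε : ε < 1 / 2) (hε₀ : 0 < ε₀) (hs : 0 ≤ s)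
    (n : ℕ) (A A' B : Matrix (Fin n) (Fin n) ℝ) (hA : A = A' + B)
    (h1 : schattenF p B < ε * schattenF p A')
    (h2 : schattenF q A' = schattenF q B)
    (h3 : ∀ B' : Matrix (Fin n) (Fin n) ℝ,
      schattenF q (B' - B) ≤ 2 * ε₀ * schattenF q B → s ≤ (nnz B' : ℝ)) :
    schattenF p (A - A') < 2 * ε * schattenF p A ∧
    ∀ At : Matrix (Fin n) (Fin n) ℝ,
      schattenF q (A - At) ≤ ε₀ * schattenF q A → s - (nnz A' : ℝ) ≤ (nnz At : ℝ) := by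
  have hBA : A - A' = B := by rw [hA]; exact add_sub_cancel_left A' B
  have hA0 : 0 ≤ schattenF p A := Stmt5Aux.schattenF_nonneg p A
  have hB0 : 0 ≤ schattenF p B := Stmt5Aux.schattenF_nonneg p B
  have htri1 : schattenF p A' ≤ schattenF p A + schattenF p B := by
    have h := Stmt5Aux.schattenF_triangle hp A (-B)
    rw [Stmt5Aux.schattenF_neg] at h
    have hAB : A + -B = A' := by rw [hA]; abel
    rwa [hAB] at h
  constructor
  · rw [hBA]
    have hεA' : ε * schattenF p A' ≤ ε * (schattenF p A + schattenF p B) :=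
      mul_le_mul_of_nonneg_left htri1 (le_of_lt hε0)
    nlinarith [h1, hεA', hA0, hB0, hε0, hε]
  · intro At hAt
    have hqB0 : 0 ≤ schattenF q B := Stmt5Aux.schattenF_nonneg q B
    have htri2 : schattenF q A ≤ 2 * schattenF q B := by
      have h := Stmt5Aux.schattenF_triangle hq A' B
      rw [← hA, h2] at h
      linarith
    have hkey : schattenF q ((At - A') - B) ≤ 2 * ε₀ * schattenF q B := by
      have hEq : (At - A') - B = -(A - At) := by rw [hA]; abel
      rw [hEq, Stmt5Aux.schattenF_neg]
      calc schattenF q (A - At) ≤ ε₀ * schattenF q A := hAt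
        _ ≤ ε₀ * (2 * schattenF q B) := mul_le_mul_of_nonneg_left htri2 (le_of_lt hε₀)
        _ = 2 * ε₀ * schattenF q B := by ring
    have hs' := h3 (At - A') hkey
    have hnnz : nnz (At - A') ≤ nnz At + nnz A' := Stmt5Aux.nnz_sub_le At A'
    have hcast : (nnz (At - A') : ℝ) ≤ (nnz At : ℝ) + (nnz A' : ℝ) := by exact_mod_cast hnnz
    linarith
end

section
/- For every real q ≥ 2, every matrix A ∈ ℝ^{n×d}, and every collection U₁, …, U_k of pairwise disjoint subsets of {1, …, d}: ‖A‖_{S_q}^q ≥ Σ_{i=1}^k ‖A^{(Uᵢ)}‖_{S_∞}^q, where A^{(Uᵢ)} denotes the submatrix of A consisting of the columns indexed by Uᵢ. -/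
open scoped BigOperators ENNReal
open Matrix

lemma dot_eq_inner {ι : Type*} [Fintype ι] (x y : EuclideanSpace ℝ ι) :
    (x : ι → ℝ) ⬝ᵥ (y : ι → ℝ) = inner ℝ x y := by
  simp [PiLp.inner_apply, dotProduct, RCLike.inner_apply, conj_trivial, mul_comm]

lemma core_ineq {d : ℕ} {ι : Type*} [Fintype ι] {M : Matrix (Fin d) (Fin d) ℝ}
    (hM : M.IsHermitian) (hpsd : M.PosSemidef) {p : ℝ} (hp : 1 ≤ p)
    (v : ι → EuclideanSpace ℝ (Fin d)) (hv : Orthonormal ℝ v) :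
    ∑ i, ((v i : Fin d → ℝ) ⬝ᵥ M *ᵥ (v i : Fin d → ℝ)) ^ p ≤ ∑ j, hM.eigenvalues j ^ p := by
  classical
  set b := hM.eigenvectorBasis with hb
  set lam := hM.eigenvalues with hlam
  set c : ι → Fin d → ℝ := fun i j => inner ℝ (b j) (v i) with hc
  have hlam0 : ∀ j, 0 ≤ lam j := fun j => hpsd.eigenvalues_nonneg j
  -- basis expansion of v i as plain functions
  have hrepr : ∀ i, (v i : Fin d → ℝ) = ∑ j, c i j • ((b j : EuclideanSpace ℝ (Fin d)) : Fin d → ℝ) := by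
    intro i
    exact (congrArg WithLp.ofLp (b.sum_repr' (v i)).symm).trans (by simp [hc])
  -- dot of v i with b j
  have hdb : ∀ i j, (v i : Fin d → ℝ) ⬝ᵥ ((b j : EuclideanSpace ℝ (Fin d)) : Fin d → ℝ) = c i j := by
    intro i j
    rw [dot_eq_inner, hc, real_inner_comm]
  -- dot sum lemma
  have dsum : ∀ (x : Fin d → ℝ) (f : Fin d → Fin d → ℝ), x ⬝ᵥ (∑ j, f j) = ∑ j, x ⬝ᵥ f j := by
    intro x f
    simp only [dotProduct, Finset.sum_apply, Finset.mul_sum]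
    exact Finset.sum_comm
  -- quadratic form
  have hquad : ∀ i, (v i : Fin d → ℝ) ⬝ᵥ M *ᵥ (v i : Fin d → ℝ) = ∑ j, c i j ^ 2 * lam j := by
    intro i
    have e1 : M *ᵥ (v i : Fin d → ℝ)
        = ∑ j, (c i j * lam j) • ((b j : EuclideanSpace ℝ (Fin d)) : Fin d → ℝ) := by
      conv_lhs => rw [hrepr i]
      rw [show M *ᵥ (∑ j, c i j • ((b j : EuclideanSpace ℝ (Fin d)) : Fin d → ℝ))
          = ∑ j, M *ᵥ (c i j • ((b j : EuclideanSpace ℝ (Fin d)) : Fin d → ℝ)) from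
        map_sum M.mulVecLin _ _]
      refine Finset.sum_congr rfl fun j _ => ?_
      rw [mulVec_smul, ← smul_smul]
      exact congrArg (c i j • ·) (hM.mulVec_eigenvectorBasis j)
    rw [e1, dsum]
    refine Finset.sum_congr rfl fun j _ => ?_
    rw [dotProduct_smul, smul_eq_mul, hdb]
    ring
  -- Parseval
  have hpar : ∀ i, ∑ j, c i j ^ 2 = 1 := by
    intro i
    have h1 : (v i : Fin d → ℝ) ⬝ᵥ (v i : Fin d → ℝ) = ∑ j, c i j ^ 2 := by
      nth_rewrite 2 [hrepr i]
      rw [dsum]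
      refine Finset.sum_congr rfl fun j _ => ?_
      rw [dotProduct_smul, smul_eq_mul, hdb]
      ring
    rw [← h1, dot_eq_inner, real_inner_self_eq_norm_sq, hv.1 i, one_pow]
  -- Bessel
  have hbes : ∀ j, ∑ i, c i j ^ 2 ≤ 1 := by
    intro j
    have h2 := hv.sum_inner_products_le (𝕜 := ℝ) (x := (b j : EuclideanSpace ℝ (Fin d))) (s := Finset.univ)
    have h3 : ‖(b j : EuclideanSpace ℝ (Fin d))‖ = 1 := b.orthonormal.1 j
    calc ∑ i, c i j ^ 2 = ∑ i, ‖inner (𝕜 := ℝ) (v i) (b j : EuclideanSpace ℝ (Fin d))‖ ^ 2 := by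
          refine Finset.sum_congr rfl fun i _ => ?_
          rw [hc]; rw [real_inner_comm]; rw [Real.norm_eq_abs, sq_abs]
      _ ≤ ‖(b j : EuclideanSpace ℝ (Fin d))‖ ^ 2 := h2
      _ = 1 := by rw [h3]; norm_num
  -- Jensen + combine
  calc ∑ i, ((v i : Fin d → ℝ) ⬝ᵥ M *ᵥ (v i : Fin d → ℝ)) ^ p
      ≤ ∑ i, ∑ j, c i j ^ 2 * lam j ^ p := by
        refine Finset.sum_le_sum fun i _ => ?_
        rw [hquad i]
        exact Real.rpow_arith_mean_le_arith_mean_rpow Finset.univ _ _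
          (fun j _ => sq_nonneg _) (hpar i) (fun j _ => hlam0 j) hp
    _ = ∑ j, (∑ i, c i j ^ 2) * lam j ^ p := by
        rw [Finset.sum_comm]
        exact Finset.sum_congr rfl fun j _ => (Finset.sum_mul _ _ _).symm
    _ ≤ ∑ j, lam j ^ p := by
        refine Finset.sum_le_sum fun j _ => ?_
        have := Real.rpow_nonneg (hlam0 j) p
        nlinarith [hbes j]

lemma exists_witness {n d : ℕ} (A : Matrix (Fin n) (Fin d) ℝ) (q : ℝ) (hq0 : 0 < q)
    (S : Finset (Fin d)) (hne : S.Nonempty) :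
    ∃ w : EuclideanSpace ℝ (Fin d), ‖w‖ = 1 ∧ (∀ a, a ∉ S → w a = 0) ∧
      specNorm (A.submatrix id (fun j : (S : Finset (Fin d)) => (j : Fin d))) ^ q
        = ((w : Fin d → ℝ) ⬝ᵥ (Aᵀ * A) *ᵥ (w : Fin d → ℝ)) ^ (q / 2) := by
  classical
  set B := A.submatrix id (fun j : (S : Finset (Fin d)) => (j : Fin d)) with hBdef
  have hB : (Bᵀ * B).IsHermitian := isHermitian_conjTranspose_mul_self B
  have hpsdB : (Bᵀ * B).PosSemidef := by
    have h := posSemidef_conjTranspose_mul_self B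
    rwa [conjTranspose_eq_transpose_of_trivial] at h
  set μ : ↥S → ℝ := hB.eigenvalues with hmu
  have hmu0 : ∀ j, 0 ≤ μ j := fun j => hpsdB.eigenvalues_nonneg j
  haveI : Nonempty ↥S := hne.to_subtype
  obtain ⟨j₀, hj₀⟩ := Finite.exists_max μ
  have hspec : specNorm B = Real.sqrt (μ j₀) := by
    have hub : ∀ j, singVals B j ≤ Real.sqrt (μ j₀) := fun j => Real.sqrt_le_sqrt (hj₀ j)
    have hge : Real.sqrt (μ j₀) ≤ specNorm B :=
      le_ciSup (f := singVals B) (Set.finite_range _).bddAbove j₀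
    exact le_antisymm (ciSup_le hub) hge
  set u : EuclideanSpace ℝ ↥S := hB.eigenvectorBasis j₀ with hu
  have hu1 : ‖u‖ = 1 := hB.eigenvectorBasis.orthonormal.1 j₀
  set w : EuclideanSpace ℝ (Fin d) := WithLp.toLp 2 (fun a => if h : a ∈ S then u ⟨a, h⟩ else 0) with hw
  have hsupp : ∀ a, a ∉ S → w a = 0 := fun a ha => dif_neg ha
  have hwS : ∀ x : ↥S, w (x : Fin d) = u x := by
    intro x; simp only [hw]; rw [dif_pos x.2]
  have hrestr : ∀ f : Fin d → ℝ, (∀ a ∉ S, f a = 0) → ∑ a, f a = ∑ x : ↥S, f x := by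
    intro f hf
    rw [Finset.sum_coe_sort S f]
    exact (Finset.sum_subset (Finset.subset_univ S) (fun a _ ha => hf a ha)).symm
  have hnorm : ‖w‖ = 1 := by
    rw [EuclideanSpace.norm_eq]
    have h1 : ∑ a, ‖w a‖ ^ 2 = ∑ x : ↥S, ‖u x‖ ^ 2 := by
      rw [hrestr _ (fun a ha => by rw [hsupp a ha]; simp)]
      exact Finset.sum_congr rfl fun x _ => by rw [hwS x]
    rw [h1, ← EuclideanSpace.norm_eq, hu1]
  have hquad : (w : Fin d → ℝ) ⬝ᵥ (Aᵀ * A) *ᵥ (w : Fin d → ℝ) = μ j₀ := by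
    have hMBB : ∀ x y : ↥S, (Aᵀ * A) (x : Fin d) (y : Fin d) = (Bᵀ * B) x y := by
      intro x y
      simp [Matrix.mul_apply, hBdef]
    have hmv : ∀ x : ↥S,
        ((Aᵀ * A) *ᵥ (w : Fin d → ℝ)) (x : Fin d) = ((Bᵀ * B) *ᵥ (u : ↥S → ℝ)) x := by
      intro x
      show ∑ a, (Aᵀ * A) (x : Fin d) a * w a = ∑ y, (Bᵀ * B) x y * u y
      rw [hrestr _ (fun a ha => by rw [hsupp a ha, mul_zero])]
      exact Finset.sum_congr rfl fun y _ => by rw [hwS y, hMBB x y]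
    have h2 : (w : Fin d → ℝ) ⬝ᵥ (Aᵀ * A) *ᵥ (w : Fin d → ℝ)
        = (u : ↥S → ℝ) ⬝ᵥ ((Bᵀ * B) *ᵥ (u : ↥S → ℝ)) := by
      show ∑ a, w a * ((Aᵀ * A) *ᵥ (w : Fin d → ℝ)) a = _
      rw [hrestr _ (fun a ha => by rw [hsupp a ha, zero_mul])]
      exact Finset.sum_congr rfl fun x _ => by rw [hwS x, hmv x]
    rw [h2]
    have h3 : (Bᵀ * B) *ᵥ (u : ↥S → ℝ) = μ j₀ • (u : ↥S → ℝ) :=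
      hB.mulVec_eigenvectorBasis j₀
    rw [h3, dotProduct_smul, smul_eq_mul, dot_eq_inner, real_inner_self_eq_norm_sq, hu1]
    norm_num
  refine ⟨w, hnorm, hsupp, ?_⟩
  rw [hquad, hspec, Real.sqrt_eq_rpow, ← Real.rpow_mul (hmu0 j₀)]
  congr 1
  ring

/-- pinching-type inequality: for `q ≥ 2` and pairwise disjoint column sets
`U₁, …, U_k`, we have `‖A‖_{S_q}^q ≥ Σᵢ ‖A^{(Uᵢ)}‖_{S_∞}^q`. -/
theorem stmt8 (q : ℝ) (hq : 2 ≤ q) (n d k : ℕ) (A : Matrix (Fin n) (Fin d) ℝ)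
    (U : Fin k → Finset (Fin d)) (hU : ∀ i j, i ≠ j → Disjoint (U i) (U j)) :
    ∑ i : Fin k,
        (specNorm (A.submatrix id (fun j : (U i : Finset (Fin d)) => (j : Fin d)))) ^ q
      ≤ schattenF q A ^ q := by
  classical
  have hq0 : (0:ℝ) < q := lt_of_lt_of_le two_pos hq
  have hp : (1:ℝ) ≤ q / 2 := by linarith
  have hM : (Aᵀ * A).IsHermitian := isHermitian_conjTranspose_mul_self A
  have hpsd : (Aᵀ * A).PosSemidef := by
    have h := posSemidef_conjTranspose_mul_self A
    rwa [conjTranspose_eq_transpose_of_trivial] at h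
  -- rewrite the RHS
  have hRHS : schattenF q A ^ q = ∑ j, hM.eigenvalues j ^ (q / 2) := by
    have h0 : ∀ j, 0 ≤ singVals A j := fun j => Real.sqrt_nonneg _
    have hsum0 : 0 ≤ ∑ j, singVals A j ^ q :=
      Finset.sum_nonneg fun j _ => Real.rpow_nonneg (h0 j) q
    rw [schattenF, ← Real.rpow_mul hsum0, one_div_mul_cancel (ne_of_gt hq0), Real.rpow_one]
    refine Finset.sum_congr rfl fun j _ => ?_
    show Real.sqrt (hM.eigenvalues j) ^ q = _
    rw [Real.sqrt_eq_rpow, ← Real.rpow_mul (hpsd.eigenvalues_nonneg j)]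
    congr 1
    ring
  rw [hRHS]
  -- drop the terms with empty U i
  set s : Finset (Fin k) := Finset.univ.filter (fun i => (U i).Nonempty) with hs
  have hzero : ∀ i ∈ Finset.univ, i ∉ s →
      (specNorm (A.submatrix id (fun j : (U i : Finset (Fin d)) => (j : Fin d)))) ^ q = 0 := by
    intro i _ hi
    have hemp : ¬ (U i).Nonempty := by
      intro h; exact hi (Finset.mem_filter.mpr ⟨Finset.mem_univ i, h⟩)
    rw [Finset.not_nonempty_iff_eq_empty] at hemp
    haveI : IsEmpty ↥(U i) := by rw [hemp]; exact Finset.isEmpty_coe_sort.mpr rfl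
    have : specNorm (A.submatrix id (fun j : (U i : Finset (Fin d)) => (j : Fin d))) = 0 :=
      Real.iSup_of_isEmpty _
    rw [this, Real.zero_rpow (ne_of_gt hq0)]
  rw [← Finset.sum_subset (Finset.subset_univ s) hzero]
  rw [← Finset.sum_coe_sort s
    (fun i => (specNorm (A.submatrix id (fun j : (U i : Finset (Fin d)) => (j : Fin d)))) ^ q)]
  -- choose witnesses
  have hex : ∀ i : {i // i ∈ s}, ∃ w : EuclideanSpace ℝ (Fin d), ‖w‖ = 1 ∧
      (∀ a, a ∉ U i.1 → w a = 0) ∧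
      specNorm (A.submatrix id (fun j : (U i.1 : Finset (Fin d)) => (j : Fin d))) ^ q
        = ((w : Fin d → ℝ) ⬝ᵥ (Aᵀ * A) *ᵥ (w : Fin d → ℝ)) ^ (q / 2) := by
    intro i
    exact exists_witness A q hq0 (U i.1) ((Finset.mem_filter.mp i.2).2)
  choose w hw1 hw2 hw3 using hex
  have horth : Orthonormal ℝ w := by
    rw [orthonormal_iff_ite]
    intro i j
    by_cases hij : i = j
    · subst hij
      rw [if_pos rfl, real_inner_self_eq_norm_sq, hw1 i, one_pow]
    · rw [if_neg hij]
      have hd : Disjoint (U i.1) (U j.1) := hU i.1 j.1 (fun h => hij (Subtype.ext h))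
      rw [PiLp.inner_apply]
      refine Finset.sum_eq_zero fun a _ => ?_
      by_cases ha : a ∈ U i.1
      · have : a ∉ U j.1 := Finset.disjoint_left.mp hd ha
        rw [hw2 j a this]
        simp
      · rw [hw2 i a ha]
        simp
  calc ∑ i : {i // i ∈ s},
        (specNorm (A.submatrix id (fun j : (U i.1 : Finset (Fin d)) => (j : Fin d)))) ^ q
      = ∑ i : {i // i ∈ s}, ((w i : Fin d → ℝ) ⬝ᵥ (Aᵀ * A) *ᵥ (w i : Fin d → ℝ)) ^ (q / 2) :=
        Finset.sum_congr rfl fun i _ => hw3 i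
    _ ≤ ∑ j, hM.eigenvalues j ^ (q / 2) := core_ineq hM hpsd hp w horth
end

section
/- Let q ≥ 2 be real, let m be a positive integer dividing n, let H ∈ {−1, +1}^{n×n} satisfy H Hᵀ = n·I, and let B ∈ ℝ^{n×n} be the matrix whose n rows, partitioned into m consecutive blocks of n/m rows each, are all equal within block i to the i-th row of H. Then B has exactly m nonzero singular values, all equal to n/√m (so ‖B‖_{S_q} = m^{1/q}·n/√m), and every B' ∈ ℝ^{n×n} with ‖B' − B‖_{S_q} ≤ (1/4)‖B‖_{S_q} satisfies nnz(B') > n·m/4. -/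
open scoped BigOperators ENNReal
open Matrix

/-- Bessel's inequality for a finite orthonormal family of vectors in `Fin N → ℝ`,
phrased with raw sums. -/
lemma besselSum {N : ℕ} {ι : Type*} [DecidableEq ι] (S : Finset ι) (v : ι → Fin N → ℝ)
    (hv : ∀ j ∈ S, ∀ l ∈ S, ∑ i, v j i * v l i = if j = l then 1 else 0)
    (x : Fin N → ℝ) : ∑ j ∈ S, (∑ i, v j i * x i) ^ 2 ≤ ∑ i, x i * x i := by
  set V : S → EuclideanSpace ℝ (Fin N) := fun j => WithLp.toLp 2 (v j) with hV
  set X : EuclideanSpace ℝ (Fin N) := WithLp.toLp 2 x with hX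
  have horth : Orthonormal ℝ V := by
    rw [orthonormal_iff_ite]
    intro j l
    have h := hv j j.2 l l.2
    have h2 : (inner ℝ (V j) (V l) : ℝ) = ∑ i, v (j:ι) i * v (l:ι) i := by
      simp [PiLp.inner_apply, RCLike.inner_apply, conj_trivial, hV]
      exact Finset.sum_congr rfl fun i _ => mul_comm _ _
    rw [h2, h]
    by_cases hjl : j = l
    · rw [if_pos (congrArg Subtype.val hjl), if_pos hjl]
    · rw [if_neg (fun h' => hjl (Subtype.ext h')), if_neg hjl]
  have hb := horth.sum_inner_products_le (𝕜 := ℝ) X (s := (Finset.univ : Finset S))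
  have hxx : ‖X‖ ^ 2 = ∑ i, x i * x i := by
    rw [← real_inner_self_eq_norm_sq]
    simp only [PiLp.inner_apply, RCLike.inner_apply, conj_trivial, hX, PiLp.toLp_apply]
  rw [hxx] at hb
  calc ∑ j ∈ S, (∑ i, v j i * x i) ^ 2
      = ∑ j : S, (∑ i, v (j : ι) i * x i) ^ 2 := (Finset.sum_coe_sort S _).symm
    _ ≤ ∑ i, x i * x i := by
        refine le_trans (le_of_eq ?_) hb
        refine Finset.sum_congr rfl fun j _ => ?_
        simp [PiLp.inner_apply, RCLike.inner_apply, conj_trivial, Real.norm_eq_abs, sq_abs, hV, hX]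
        rw [Finset.sum_congr rfl fun i _ => mul_comm (v j i) (x i)]

/-- Parseval for an orthonormal basis given as raw vectors -/
lemma parsevalSum {N : ℕ} (b : OrthonormalBasis (Fin N) ℝ (EuclideanSpace ℝ (Fin N)))
    (x : Fin N → ℝ) : ∑ j, (∑ i, x i * b j i) ^ 2 = ∑ i, x i * x i := by
  set X : EuclideanSpace ℝ (Fin N) := WithLp.toLp 2 x with hX
  have h := b.sum_inner_mul_inner X X
  have h2 : (inner ℝ X X : ℝ) = ∑ i, x i * x i := by
    simp only [PiLp.inner_apply, RCLike.inner_apply, conj_trivial, hX, PiLp.toLp_apply]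
  rw [h2] at h
  rw [← h]
  refine Finset.sum_congr rfl fun j _ => ?_
  have e1 : (inner ℝ X (b j) : ℝ) = ∑ i, x i * b j i := by
    simp [PiLp.inner_apply, RCLike.inner_apply, conj_trivial, hX]
    exact Finset.sum_congr rfl fun i _ => mul_comm _ _
  have e2 : (inner ℝ (b j) X : ℝ) = ∑ i, x i * b j i := by
    simp only [PiLp.inner_apply, RCLike.inner_apply, conj_trivial, hX]
  rw [e1, e2, sq]

/-- Jensen for `t ↦ t^p`, `p ≥ 1`, with subprobability weights. -/
lemma jensenRpow {ι : Type*} (S : Finset ι) (c μ : ι → ℝ) (hc : ∀ i ∈ S, 0 ≤ c i)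
    (hμ : ∀ i ∈ S, 0 ≤ μ i) (hc1 : ∑ i ∈ S, c i ≤ 1) {p : ℝ} (hp : 1 ≤ p) :
    (∑ i ∈ S, c i * μ i) ^ p ≤ ∑ i ∈ S, c i * μ i ^ p := by
  rcases eq_or_lt_of_le (Finset.sum_nonneg hc) with h0 | hpos
  · have hz : ∀ i ∈ S, c i = 0 := by
      intro i hi
      exact (Finset.sum_eq_zero_iff_of_nonneg hc).mp h0.symm i hi
    have e1 : ∑ i ∈ S, c i * μ i = 0 := Finset.sum_eq_zero fun i hi => by rw [hz i hi, zero_mul]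
    have e2 : ∑ i ∈ S, c i * μ i ^ p = 0 := Finset.sum_eq_zero fun i hi => by rw [hz i hi, zero_mul]
    rw [e1, e2, Real.zero_rpow (by linarith)]
  · set s := ∑ i ∈ S, c i with hs
    have hsne : s ≠ 0 := ne_of_gt hpos
    have key := Real.rpow_arith_mean_le_arith_mean_rpow S (fun i => c i / s) μ
      (fun i hi => div_nonneg (hc i hi) hpos.le)
      (by rw [← Finset.sum_div]; field_simp; exact hs.symm) hμ hp
    have e1 : ∑ i ∈ S, (c i / s) * μ i = (∑ i ∈ S, c i * μ i) / s := by
      rw [Finset.sum_div]; exact Finset.sum_congr rfl fun i _ => by ring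
    have e2 : ∑ i ∈ S, (c i / s) * μ i ^ p = (∑ i ∈ S, c i * μ i ^ p) / s := by
      rw [Finset.sum_div]; exact Finset.sum_congr rfl fun i _ => by ring
    rw [e1, e2] at key
    have hsum_nonneg : 0 ≤ ∑ i ∈ S, c i * μ i :=
      Finset.sum_nonneg fun i hi => mul_nonneg (hc i hi) (hμ i hi)
    have hdiv : (∑ i ∈ S, c i * μ i) ^ p ≤ s ^ p * ((∑ i ∈ S, c i * μ i ^ p) / s) := by
      calc (∑ i ∈ S, c i * μ i) ^ p
          = (s * ((∑ i ∈ S, c i * μ i) / s)) ^ p := by field_simp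
        _ = s ^ p * ((∑ i ∈ S, c i * μ i) / s) ^ p :=
            Real.mul_rpow hpos.le (div_nonneg hsum_nonneg hpos.le)
        _ ≤ s ^ p * ((∑ i ∈ S, c i * μ i ^ p) / s) :=
            mul_le_mul_of_nonneg_left key (Real.rpow_nonneg hpos.le p)
    have hsp : s ^ p * ((∑ i ∈ S, c i * μ i ^ p) / s) = s ^ (p - 1) * ∑ i ∈ S, c i * μ i ^ p := by
      rw [Real.rpow_sub_one hsne]
      ring
    rw [hsp] at hdiv
    have hsle : s ^ (p - 1) ≤ 1 := Real.rpow_le_one hpos.le hc1 (by linarith)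
    have hrhs_nonneg : 0 ≤ ∑ i ∈ S, c i * μ i ^ p :=
      Finset.sum_nonneg fun i hi => mul_nonneg (hc i hi) (Real.rpow_nonneg (hμ i hi) p)
    nlinarith [hdiv]

/-- Sum of eigenvalues equals trace, for a real hermitian matrix. -/
lemma sumEigTrace {N : ℕ} {A : Matrix (Fin N) (Fin N) ℝ} (hA : A.IsHermitian) :
    ∑ i, hA.eigenvalues i = A.trace := by
  conv_rhs => rw [hA.spectral_theorem]
  rw [Unitary.conjStarAlgAut_apply, Matrix.trace_mul_cycle]
  have h1 : (star (hA.eigenvectorUnitary : Matrix (Fin N) (Fin N) ℝ)) *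
      (hA.eigenvectorUnitary : Matrix (Fin N) (Fin N) ℝ) = 1 :=
    Matrix.mem_unitaryGroup_iff'.mp hA.eigenvectorUnitary.2
  rw [h1, Matrix.one_mul, Matrix.trace_diagonal]
  simp

/-- the fiber of `i ↦ i / bsz` over `c < m` in `Fin (m*bsz)` has `bsz` elements -/
lemma fiberCard {n m bsz : ℕ} (hb : 0 < bsz) (hn : n = m * bsz) {c : ℕ} (hc : c < m) :
    (Finset.univ.filter fun i : Fin n => (i : ℕ) / bsz = c).card = bsz := by
  have hcb : ∀ t, t < bsz → c * bsz + t < n := by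
    intro t ht
    calc c * bsz + t < c * bsz + bsz := by omega
      _ = (c + 1) * bsz := by ring
      _ ≤ m * bsz := Nat.mul_le_mul_right _ hc
      _ = n := hn.symm
  conv_rhs => rw [← Finset.card_range bsz]
  refine Finset.card_bij' (fun i _ => (i : ℕ) % bsz)
    (fun t ht => (⟨c * bsz + t, hcb t (Finset.mem_range.mp ht)⟩ : Fin n)) ?_ ?_ ?_ ?_
  · intro i hi
    exact Finset.mem_range.mpr (Nat.mod_lt _ hb)
  · intro t ht
    have ht' : t < bsz := Finset.mem_range.mp ht
    simp only [Finset.mem_filter, Finset.mem_univ, true_and]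
    show (c * bsz + t) / bsz = c
    rw [mul_comm c bsz, Nat.mul_add_div hb, Nat.div_eq_of_lt ht', add_zero]
  · intro i hi
    have hi' : (i : ℕ) / bsz = c := (Finset.mem_filter.mp hi).2
    apply Fin.ext
    show c * bsz + (i : ℕ) % bsz = i
    rw [← hi', mul_comm]
    exact Nat.div_add_mod _ _
  · intro t ht
    have ht' : t < bsz := Finset.mem_range.mp ht
    show (c * bsz + t) % bsz = t
    rw [mul_comm c bsz, Nat.mul_add_mod, Nat.mod_eq_of_lt ht']

set_option maxHeartbeats 1600000 in
/-- the block-repeated Hadamard-row matrix `B` has exactly `m` nonzero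
singular values, all equal to `n/√m`, so `‖B‖_{S_q} = m^{1/q}·n/√m`; and every
`(1/4, S_q)`-norm approximation of `B` (for `q ≥ 2`) has more than `nm/4` nonzeros. -/
theorem stmt9 (q : ℝ) (hq : 2 ≤ q) (n m : ℕ) (hm : 0 < m) (hmn : m ≤ n) (hdvd : m ∣ n)
    (H B : Matrix (Fin n) (Fin n) ℝ)
    (hH : ∀ i j, H i j = 1 ∨ H i j = -1)
    (hHH : H * Hᵀ = (n : ℝ) • (1 : Matrix (Fin n) (Fin n) ℝ))
    (hB : ∀ i j k : Fin n, (k : ℕ) = (i : ℕ) / (n / m) → B i j = H k j) :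
    (Finset.univ.filter fun i : Fin n => singVals B i ≠ 0).card = m ∧
    (∀ i : Fin n, singVals B i ≠ 0 → singVals B i = (n : ℝ) / Real.sqrt m) ∧
    schattenF q B = (m : ℝ) ^ (1 / q) * ((n : ℝ) / Real.sqrt m) ∧
    ∀ B' : Matrix (Fin n) (Fin n) ℝ,
      schattenF q (B' - B) ≤ (1 / 4) * schattenF q B →
      (n : ℝ) * m / 4 < (nnz B' : ℝ) := by
  classical
  obtain ⟨bsz, hbsz⟩ := hdvd
  have hn0 : 0 < n := lt_of_lt_of_le hm hmn
  have hb0 : 0 < bsz := by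
    rcases Nat.eq_zero_or_pos bsz with h | h
    · subst h; omega
    · exact h
  have hnm : n / m = bsz := by rw [hbsz]; exact Nat.mul_div_cancel_left _ hm
  have hmR : (0:ℝ) < m := by exact_mod_cast hm
  have hnR : (0:ℝ) < n := by exact_mod_cast hn0
  have hbRpos : (0:ℝ) < bsz := by exact_mod_cast hb0
  have hq0 : (0:ℝ) < q := by linarith
  have hqne : q ≠ 0 := ne_of_gt hq0
  have hsm : (0:ℝ) < Real.sqrt m := Real.sqrt_pos.mpr hmR
  -- block map
  have hklt : ∀ i : Fin n, (i : ℕ) / bsz < m := by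
    intro i
    rw [Nat.div_lt_iff_lt_mul hb0]
    have h2 := i.2
    omega
  set κ : Fin n → Fin n := fun i => ⟨(i:ℕ)/bsz, lt_of_lt_of_le (hklt i) hmn⟩ with hκ
  have hBrow : ∀ i j, B i j = H (κ i) j := by
    intro i j; exact hB i j (κ i) (by simp [hκ, hnm])
  have hH1 : ∀ k j : Fin n, H k j * H k j = 1 := by
    intro k j; rcases hH k j with h | h <;> rw [h] <;> norm_num
  have hrow : ∀ k k' : Fin n, ∑ j, H k j * H k' j = if k = k' then (n:ℝ) else 0 := by
    intro k k'
    have h := congrFun (congrFun hHH k) k'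
    simp only [Matrix.mul_apply, Matrix.transpose_apply, Matrix.smul_apply, Matrix.one_apply,
      smul_eq_mul] at h
    rw [h]
    split_ifs <;> simp
  have hfibκ : ∀ c : Fin n, (c:ℕ) < m →
      (Finset.univ.filter fun i : Fin n => κ i = c).card = bsz := by
    intro c hc
    have he : (Finset.univ.filter fun i : Fin n => κ i = c) =
        (Finset.univ.filter fun i : Fin n => (i:ℕ)/bsz = (c:ℕ)) := by
      apply Finset.filter_congr; intro i _
      simp [hκ, Fin.ext_iff]
    rw [he]; exact fiberCard hb0 hbsz hc
  -- spectral data for B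
  have hNB := Matrix.isHermitian_conjTranspose_mul_self B
  set μ : Fin n → ℝ := hNB.eigenvalues with hμdef
  have hsingB : ∀ j, singVals B j = Real.sqrt (μ j) := fun j => rfl
  set c0 : ℝ := (n:ℝ) * bsz with hc0
  have hc0pos : 0 < c0 := mul_pos hnR hbRpos
  have hBBT : B * Bᴴ = Matrix.of fun i i' : Fin n => if κ i = κ i' then (n:ℝ) else 0 := by
    ext i i'
    simp only [Matrix.mul_apply, Matrix.conjTranspose_apply, star_trivial, Matrix.of_apply]
    calc ∑ j, B i j * B i' j = ∑ j, H (κ i) j * H (κ i') j :=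
          Finset.sum_congr rfl fun j _ => by rw [hBrow, hBrow]
      _ = if κ i = κ i' then (n:ℝ) else 0 := hrow _ _
  have hKB : (Matrix.of fun i i' : Fin n => if κ i = κ i' then (n:ℝ) else 0) * B = c0 • B := by
    ext i l
    simp only [Matrix.mul_apply, Matrix.of_apply, Matrix.smul_apply, smul_eq_mul]
    calc ∑ i', (if κ i = κ i' then (n:ℝ) else 0) * B i' l
        = ∑ i', (if κ i' = κ i then (n:ℝ) * H (κ i) l else 0) := by
          refine Finset.sum_congr rfl fun i' _ => ?_
          by_cases h : κ i = κ i'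
          · rw [if_pos h, if_pos h.symm, hBrow, ← h]
          · rw [if_neg h, if_neg (Ne.symm h), zero_mul]
      _ = ∑ i' ∈ Finset.univ.filter (fun i' => κ i' = κ i), (n:ℝ) * H (κ i) l := by
          rw [Finset.sum_filter]
      _ = ((Finset.univ.filter fun i' => κ i' = κ i).card : ℝ) * ((n:ℝ) * H (κ i) l) := by
          rw [Finset.sum_const, nsmul_eq_mul]
      _ = (bsz : ℝ) * ((n:ℝ) * H (κ i) l) := by rw [hfibκ (κ i) (hklt i)]
      _ = c0 * B i l := by rw [hBrow i l, hc0]; ring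
  have hNN : (Bᴴ * B) * (Bᴴ * B) = c0 • (Bᴴ * B) := by
    calc (Bᴴ * B) * (Bᴴ * B) = Bᴴ * ((B * Bᴴ) * B) := by
          rw [Matrix.mul_assoc, ← Matrix.mul_assoc B Bᴴ B]
    _ = Bᴴ * (c0 • B) := by rw [hBBT, hKB]
    _ = c0 • (Bᴴ * B) := by rw [Matrix.mul_smul]
  set W : Fin n → (Fin n → ℝ) := fun j => ⇑(hNB.eigenvectorBasis j)
    with hWdef
  have hvecB : ∀ j, (Bᴴ * B) *ᵥ W j = μ j • W j := fun j => hNB.mulVec_eigenvectorBasis j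
  have hW0 : ∀ j, ∃ i, W j i ≠ 0 := by
    intro j
    by_contra h
    push_neg at h
    refine hNB.eigenvectorBasis.orthonormal.ne_zero j ?_
    ext i
    exact h i
  have hdich : ∀ j, μ j = 0 ∨ μ j = c0 := by
    intro j
    have h1 : ((Bᴴ * B) * (Bᴴ * B)) *ᵥ W j = (μ j * μ j) • W j := by
      rw [← Matrix.mulVec_mulVec, hvecB j, Matrix.mulVec_smul, hvecB j, smul_smul]
    rw [hNN, Matrix.smul_mulVec, hvecB j, smul_smul] at h1
    obtain ⟨i, hi⟩ := hW0 j
    have h2 := congrFun h1 i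
    simp only [Pi.smul_apply, smul_eq_mul] at h2
    have h3 : c0 * μ j = μ j * μ j := mul_right_cancel₀ hi h2
    have h4 : μ j * (μ j - c0) = 0 := by linear_combination -h3
    rcases mul_eq_zero.mp h4 with h | h
    · exact Or.inl h
    · exact Or.inr (by linarith)
  have hμnonneg : ∀ j, 0 ≤ μ j := by
    intro j
    rcases hdich j with h | h
    · rw [h]
    · rw [h]; exact hc0pos.le
  have htrace : (Bᴴ * B).trace = (n:ℝ) * n := by
    have hdiag : ∀ j : Fin n, (Bᴴ * B) j j = (n:ℝ) := by
      intro j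
      simp only [Matrix.mul_apply, Matrix.conjTranspose_apply, star_trivial]
      calc ∑ i, B i j * B i j = ∑ _i : Fin n, (1:ℝ) :=
            Finset.sum_congr rfl fun i _ => by rw [hBrow]; exact hH1 _ _
        _ = n := by simp
    rw [Matrix.trace]
    calc ∑ j, (Bᴴ * B).diag j = ∑ _j : Fin n, (n:ℝ) :=
          Finset.sum_congr rfl fun j _ => hdiag j
      _ = (n:ℝ) * n := by simp [mul_comm]
  have hsumμ : ∑ j, μ j = (n:ℝ) * n := by rw [hμdef, sumEigTrace hNB, htrace]
  set T := Finset.univ.filter fun j : Fin n => μ j ≠ 0 with hT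
  have hTsum : ∑ j, μ j = (T.card : ℝ) * c0 := by
    rw [← Finset.sum_filter_add_sum_filter_not Finset.univ (fun j => μ j ≠ 0)]
    have h1 : ∑ j ∈ T, μ j = (T.card : ℝ) * c0 := by
      calc ∑ j ∈ T, μ j = ∑ _j ∈ T, c0 := by
            refine Finset.sum_congr rfl fun j hj => ?_
            have := (Finset.mem_filter.mp hj).2
            rcases hdich j with h | h
            · exact absurd h this
            · exact h
        _ = (T.card : ℝ) * c0 := by rw [Finset.sum_const, nsmul_eq_mul]
    have h2 : ∑ j ∈ Finset.univ.filter (fun j => ¬ μ j ≠ 0), μ j = 0 := by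
      refine Finset.sum_eq_zero fun j hj => ?_
      have := (Finset.mem_filter.mp hj).2
      push_neg at this
      exact this
    rw [h1, h2, add_zero]
  have hTcard : T.card = m := by
    have hcast : ((T.card : ℝ)) * c0 = (m:ℝ) * c0 := by
      rw [← hTsum, hsumμ, hc0]
      have : (n:ℝ) = (m:ℝ) * bsz := by exact_mod_cast congrArg (Nat.cast (R := ℝ)) hbsz
      rw [this]; ring
    exact_mod_cast mul_right_cancel₀ (ne_of_gt hc0pos) hcast
  have hbR' : (bsz:ℝ) = (n:ℝ)/m := by
    have : (n:ℝ) = (m:ℝ) * bsz := by exact_mod_cast congrArg (Nat.cast (R := ℝ)) hbsz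
    field_simp [this]
    linear_combination -this
  have hsqrtc0 : Real.sqrt c0 = (n:ℝ)/Real.sqrt m := by
    rw [hc0, hbR', show (n:ℝ) * ((n:ℝ)/m) = (n:ℝ)^2 / m by ring,
      Real.sqrt_div (sq_nonneg _), Real.sqrt_sq hnR.le]
  -- Part 1
  have hfilter_eq : (Finset.univ.filter fun i : Fin n => singVals B i ≠ 0) = T := by
    apply Finset.filter_congr; intro j _
    rw [hsingB j]
    constructor
    · intro hne
      intro h0
      rw [h0, Real.sqrt_zero] at hne
      exact hne rfl
    · intro hne
      rcases hdich j with h | h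
      · exact absurd h hne
      · rw [h]
        exact ne_of_gt (Real.sqrt_pos.mpr hc0pos)
  have part1 : (Finset.univ.filter fun i : Fin n => singVals B i ≠ 0).card = m := by
    rw [hfilter_eq, hTcard]
  -- Part 2
  have part2 : ∀ i : Fin n, singVals B i ≠ 0 → singVals B i = (n : ℝ) / Real.sqrt m := by
    intro i hi
    rcases hdich i with h | h
    · exfalso; apply hi; rw [hsingB, h, Real.sqrt_zero]
    · rw [hsingB, h, hsqrtc0]
  -- Part 3
  have hvpos : (0:ℝ) < (n:ℝ)/Real.sqrt m := div_pos hnR hsm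
  have hsum_q : ∑ j, singVals B j ^ q = (m:ℝ) * ((n:ℝ)/Real.sqrt m) ^ q := by
    rw [← Finset.sum_filter_add_sum_filter_not Finset.univ (fun j => μ j ≠ 0)]
    have h1 : ∑ j ∈ T, singVals B j ^ q = (m:ℝ) * ((n:ℝ)/Real.sqrt m) ^ q := by
      calc ∑ j ∈ T, singVals B j ^ q = ∑ _j ∈ T, ((n:ℝ)/Real.sqrt m) ^ q := by
            refine Finset.sum_congr rfl fun j hj => ?_
            have hμj := (Finset.mem_filter.mp hj).2
            rcases hdich j with h | h
            · exact absurd h hμj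
            · rw [hsingB, h, hsqrtc0]
        _ = (m:ℝ) * ((n:ℝ)/Real.sqrt m) ^ q := by
            rw [Finset.sum_const, nsmul_eq_mul, hTcard]
    have h2 : ∑ j ∈ Finset.univ.filter (fun j => ¬ μ j ≠ 0), singVals B j ^ q = 0 := by
      refine Finset.sum_eq_zero fun j hj => ?_
      have hj0 := (Finset.mem_filter.mp hj).2
      push_neg at hj0
      rw [hsingB, hj0, Real.sqrt_zero, Real.zero_rpow hqne]
    rw [h1, h2, add_zero]
  have part3 : schattenF q B = (m : ℝ) ^ (1 / q) * ((n : ℝ) / Real.sqrt m) := by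
    unfold schattenF
    rw [hsum_q, Real.mul_rpow hmR.le (Real.rpow_nonneg hvpos.le q),
      ← Real.rpow_mul hvpos.le, mul_one_div_cancel hqne, Real.rpow_one]
  refine ⟨part1, part2, part3, ?_⟩
  -- Part 4
  intro B' hB'
  rw [part3] at hB'
  set E : Matrix (Fin n) (Fin n) ℝ := B' - B with hEdef
  have hNE := Matrix.isHermitian_conjTranspose_mul_self E
  set ν : Fin n → ℝ := hNE.eigenvalues with hνdef
  have hν0 : ∀ j, 0 ≤ ν j := fun j => Matrix.eigenvalues_conjTranspose_mul_self_nonneg E j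
  have hsingE : ∀ j, singVals E j = Real.sqrt (ν j) := fun j => rfl
  set p : ℝ := q / 2 with hpdef
  have hp1 : 1 ≤ p := by rw [hpdef]; linarith
  have hp0 : 0 < p := by linarith
  -- the budget
  have hbudget : ∑ j, ν j ^ p ≤ (m:ℝ) * (((n:ℝ) * bsz) ^ p * (1/16 : ℝ) ^ p) := by
    have hAν : ∑ j, singVals E j ^ q = ∑ j, ν j ^ p := by
      refine Finset.sum_congr rfl fun j _ => ?_
      rw [hsingE, Real.sqrt_eq_rpow, ← Real.rpow_mul (hν0 j)]
      congr 1
      rw [hpdef]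
      ring
    have hA0 : (0:ℝ) ≤ ∑ j, singVals E j ^ q :=
      Finset.sum_nonneg fun j _ => Real.rpow_nonneg (Real.sqrt_nonneg _) q
    have hup : ∑ j, singVals E j ^ q ≤ ((1/4) * ((m:ℝ) ^ (1/q) * ((n:ℝ)/Real.sqrt m))) ^ q := by
      have h1 : ((∑ j, singVals E j ^ q) ^ (1/q)) ^ q = ∑ j, singVals E j ^ q := by
        rw [← Real.rpow_mul hA0, one_div_mul_cancel hqne, Real.rpow_one]
      rw [← h1]
      exact Real.rpow_le_rpow (Real.rpow_nonneg hA0 _) hB' hq0.le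
    have hrhs : ((1/4) * ((m:ℝ) ^ (1/q) * ((n:ℝ)/Real.sqrt m))) ^ q
        = (m:ℝ) * (((n:ℝ) * bsz) ^ p * (1/16 : ℝ) ^ p) := by
      have hmq : (0:ℝ) ≤ (m:ℝ) ^ (1/q) := Real.rpow_nonneg hmR.le _
      rw [Real.mul_rpow (by norm_num) (mul_nonneg hmq hvpos.le),
        Real.mul_rpow hmq hvpos.le]
      have e1 : (((m:ℝ)) ^ (1/q)) ^ q = (m:ℝ) := by
        rw [← Real.rpow_mul hmR.le, one_div_mul_cancel hqne, Real.rpow_one]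
      have e2 : ((n:ℝ)/Real.sqrt m) ^ q = ((n:ℝ) * bsz) ^ p := by
        rw [← hsqrtc0, hc0, Real.sqrt_eq_rpow, ← Real.rpow_mul (mul_nonneg hnR.le hbRpos.le)]
        congr 1
        rw [hpdef]; ring
      have e3 : ((1:ℝ)/4) ^ q = (1/16 : ℝ) ^ p := by
        rw [show q = 2 * p by rw [hpdef]; ring, Real.rpow_mul (by norm_num : (0:ℝ) ≤ 1/4),
          show ((1:ℝ)/4) ^ (2:ℝ) = 1/16 by
            rw [show (2:ℝ) = ((2:ℕ):ℝ) by norm_num, Real.rpow_natCast]; norm_num]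
      rw [e1, e2, e3]; ring
    calc ∑ j, ν j ^ p = ∑ j, singVals E j ^ q := hAν.symm
      _ ≤ _ := hup
      _ = _ := hrhs
  -- spectral data for E
  set WE : Fin n → (Fin n → ℝ) := fun j => ⇑(hNE.eigenvectorBasis j)
    with hWEdef
  have hvecE : ∀ j, (Eᴴ * E) *ᵥ WE j = ν j • WE j := fun j => hNE.mulVec_eigenvectorBasis j
  have hWEorth : ∀ j l, ∑ i, WE j i * WE l i = if j = l then 1 else 0 := by
    intro j l
    have h := orthonormal_iff_ite.mp hNE.eigenvectorBasis.orthonormal j l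
    simpa [PiLp.inner_apply, RCLike.inner_apply, conj_trivial, mul_comm, hWEdef] using h
  set y : Fin n → (Fin n → ℝ) := fun j => E *ᵥ WE j with hydef
  have hyy : ∀ j l, ∑ i, y j i * y l i = if j = l then ν j else 0 := by
    intro j l
    have h1 : ∑ i, y j i * y l i = y j ⬝ᵥ y l := rfl
    rw [h1, hydef]
    rw [Matrix.dotProduct_mulVec, ← Matrix.mulVec_transpose, Matrix.mulVec_mulVec,
      ← Matrix.conjTranspose_eq_transpose_of_trivial, hvecE j, smul_dotProduct,
      smul_eq_mul]
    have h2 : WE j ⬝ᵥ WE l = if j = l then 1 else 0 := hWEorth j l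
    rw [h2]
    split_ifs <;> simp
  have hy0 : ∀ j, ν j = 0 → ∀ i, y j i = 0 := by
    intro j h0 i
    have h1 := hyy j j
    rw [if_pos rfl, h0] at h1
    have h2 : ∀ i ∈ Finset.univ, (0:ℝ) ≤ y j i * y j i := fun i _ => mul_self_nonneg _
    have h3 := (Finset.sum_eq_zero_iff_of_nonneg h2).mp h1 i (Finset.mem_univ i)
    exact mul_self_eq_zero.mp h3
  -- the block indicator vectors
  set rb : ℝ := (Real.sqrt bsz)⁻¹ with hrbdef
  have hrb2 : rb * rb = (bsz:ℝ)⁻¹ := by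
    rw [hrbdef, ← mul_inv, Real.mul_self_sqrt hbRpos.le]
  set emb : Fin m → Fin n := fun k => ⟨(k:ℕ), lt_of_lt_of_le k.2 hmn⟩ with hembdef
  have hembm : ∀ k : Fin m, ((emb k : Fin n) : ℕ) < m := fun k => k.2
  have hembinj : ∀ k k', emb k = emb k' → k = k' := by
    intro k k' h
    have h2 : (k:ℕ) = (k':ℕ) := by
      have h3 := congrArg Fin.val h
      simpa [hembdef] using h3
    exact Fin.ext h2
  set u : Fin m → (Fin n → ℝ) := fun k i => if κ i = emb k then rb else 0 with hudef
  have hu : ∀ k k', ∑ i, u k i * u k' i = if k = k' then 1 else 0 := by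
    intro k k'
    by_cases hkk : k = k'
    · subst hkk
      rw [if_pos rfl]
      calc ∑ i, u k i * u k i = ∑ i, (if κ i = emb k then rb * rb else 0) := by
            refine Finset.sum_congr rfl fun i _ => ?_
            rw [hudef]
            dsimp only
            split_ifs <;> simp
        _ = ∑ i ∈ Finset.univ.filter (fun i => κ i = emb k), rb * rb := (Finset.sum_filter _ _).symm
        _ = ((Finset.univ.filter fun i : Fin n => κ i = emb k).card : ℝ) * (rb * rb) := by
            rw [Finset.sum_const, nsmul_eq_mul]
        _ = (bsz:ℝ) * (bsz:ℝ)⁻¹ := by rw [hfibκ (emb k) (hembm k), hrb2]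
        _ = 1 := mul_inv_cancel₀ (ne_of_gt hbRpos)
    · rw [if_neg hkk]
      refine Finset.sum_eq_zero fun i _ => ?_
      rw [hudef]
      dsimp only
      by_cases h1 : κ i = emb k
      · rw [if_pos h1, if_neg (fun h2 => hkk (hembinj k k' (h1.symm.trans h2))), mul_zero]
      · rw [if_neg h1, zero_mul]
  set t : Fin m → (Fin n → ℝ) := fun k j => ∑ i, u k i * E i j with htdef
  set d : Fin m → ℝ := fun k => ∑ j, t k j ^ 2 with hddef
  have hty : ∀ k j, ∑ s, t k s * WE j s = ∑ i, u k i * y j i := by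
    intro k j
    calc ∑ s, t k s * WE j s = ∑ s, ∑ i, (u k i * E i s) * WE j s := by
          refine Finset.sum_congr rfl fun s _ => ?_
          rw [htdef]
          dsimp only
          rw [Finset.sum_mul]
      _ = ∑ i, ∑ s, (u k i * E i s) * WE j s := Finset.sum_comm
      _ = ∑ i, u k i * y j i := by
          refine Finset.sum_congr rfl fun i _ => ?_
          rw [hydef]
          dsimp only
          show ∑ s, u k i * E i s * WE j s = u k i * (E *ᵥ WE j) i
          rw [show (E *ᵥ WE j) i = ∑ s, E i s * WE j s from rfl, Finset.mul_sum]
          exact Finset.sum_congr rfl fun s _ => by ring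
  have hdk : ∀ k, d k = ∑ j, (∑ i, u k i * y j i) ^ 2 := by
    intro k
    have hP := parsevalSum hNE.eigenvectorBasis (t k)
    rw [hddef]
    dsimp only
    calc ∑ j, t k j ^ 2 = ∑ i, t k i * t k i :=
          Finset.sum_congr rfl fun i _ => sq (t k i)
      _ = ∑ j, (∑ s, t k s * WE j s) ^ 2 := hP.symm
      _ = ∑ j, (∑ i, u k i * y j i) ^ 2 :=
          Finset.sum_congr rfl fun j _ => by rw [hty k j]
  -- the Jensen weights
  set cw : Fin m → Fin n → ℝ :=
    fun k j => if ν j = 0 then 0 else (∑ i, u k i * y j i) ^ 2 / ν j with hcwdef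
  have hcw0 : ∀ k j, 0 ≤ cw k j := by
    intro k j
    rw [hcwdef]
    dsimp only
    split_ifs with h
    · exact le_refl 0
    · exact div_nonneg (sq_nonneg _) (hν0 j)
  have hcwv : ∀ k j, (∑ i, u k i * y j i) ^ 2 = cw k j * ν j := by
    intro k j
    rw [hcwdef]
    dsimp only
    split_ifs with h
    · rw [h, mul_zero]
      have hz : ∑ i, u k i * y j i = 0 :=
        Finset.sum_eq_zero fun i _ => by rw [hy0 j h i, mul_zero]
      rw [hz]
      norm_num
    · rw [div_mul_cancel₀ _ h]
  have hcol : ∀ k, ∑ j, cw k j ≤ 1 := by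
    intro k
    have hsplit : ∑ j, cw k j = ∑ j ∈ Finset.univ.filter (fun j : Fin n => ν j ≠ 0), cw k j := by
      rw [← Finset.sum_filter_add_sum_filter_not Finset.univ (fun j => ν j ≠ 0) (cw k)]
      have hz : ∑ j ∈ Finset.univ.filter (fun j => ¬ ν j ≠ 0), cw k j = 0 := by
        refine Finset.sum_eq_zero fun j hj => ?_
        have h0 := (Finset.mem_filter.mp hj).2
        push_neg at h0
        rw [hcwdef]
        dsimp only
        rw [if_pos h0]
      rw [hz, add_zero]
    set v : Fin n → Fin n → ℝ := fun j i => (Real.sqrt (ν j))⁻¹ * y j i with hvdef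
    have hvorth : ∀ j ∈ Finset.univ.filter (fun j : Fin n => ν j ≠ 0),
        ∀ l ∈ Finset.univ.filter (fun j : Fin n => ν j ≠ 0),
        ∑ i, v j i * v l i = if j = l then 1 else 0 := by
      intro j hj l hl
      have hνj : ν j ≠ 0 := (Finset.mem_filter.mp hj).2
      have hre : ∑ i, v j i * v l i
          = (Real.sqrt (ν j))⁻¹ * (Real.sqrt (ν l))⁻¹ * ∑ i, y j i * y l i := by
        rw [Finset.mul_sum]
        exact Finset.sum_congr rfl fun i _ => by rw [hvdef]; dsimp only; ring
      rw [hre, hyy]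
      split_ifs with h
      · subst h
        rw [← mul_inv, Real.mul_self_sqrt (hν0 j)]
        exact inv_mul_cancel₀ hνj
      · rw [mul_zero]
    have hbess := besselSum _ v hvorth (u k)
    have huu : ∑ i, u k i * u k i = 1 := by rw [hu k k, if_pos rfl]
    rw [huu] at hbess
    rw [hsplit]
    refine le_trans (le_of_eq ?_) hbess
    refine Finset.sum_congr rfl fun j hj => ?_
    have hνj : ν j ≠ 0 := (Finset.mem_filter.mp hj).2
    rw [hcwdef]
    dsimp only
    rw [if_neg hνj]
    have h1 : ∑ i, v j i * u k i = (Real.sqrt (ν j))⁻¹ * ∑ i, u k i * y j i := by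
      rw [Finset.mul_sum]
      exact Finset.sum_congr rfl fun i _ => by rw [hvdef]; dsimp only; ring
    rw [h1, mul_pow, inv_pow, Real.sq_sqrt (hν0 j)]
    rw [div_eq_inv_mul]
  have hrowB : ∀ j, ∑ k, cw k j ≤ 1 := by
    intro j
    by_cases h0 : ν j = 0
    · have hz : ∀ k : Fin m, cw k j = 0 := by
        intro k
        rw [hcwdef]
        dsimp only
        rw [if_pos h0]
      rw [Finset.sum_congr rfl fun k _ => hz k]
      simp
    · have hbess := besselSum Finset.univ u (fun k _ k' _ => hu k k') (y j)
      have hyj : ∑ i, y j i * y j i = ν j := by rw [hyy j j, if_pos rfl]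
      rw [hyj] at hbess
      have hbess' : ∑ k, (∑ i, u k i * y j i) ^ 2 ≤ ν j := hbess
      have hνpos : 0 < ν j := lt_of_le_of_ne (hν0 j) (Ne.symm h0)
      calc ∑ k, cw k j = (∑ k, (∑ i, u k i * y j i) ^ 2) / ν j := by
            rw [Finset.sum_div]
            refine Finset.sum_congr rfl fun k _ => ?_
            rw [hcwdef]
            dsimp only
            rw [if_neg h0]
        _ ≤ ν j / ν j := by exact div_le_div_of_nonneg_right hbess' (hν0 j)
        _ = 1 := div_self h0
  have hJen : ∀ k, d k ^ p ≤ ∑ j, cw k j * ν j ^ p := by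
    intro k
    have hd : d k = ∑ j, cw k j * ν j := by
      rw [hdk k]
      exact Finset.sum_congr rfl fun j _ => hcwv k j
    rw [hd]
    exact jensenRpow Finset.univ (cw k) ν (fun j _ => hcw0 k j) (fun j _ => hν0 j) (hcol k) hp1
  have hsum_dp : ∑ k, d k ^ p ≤ ∑ j, ν j ^ p := by
    calc ∑ k, d k ^ p ≤ ∑ k, ∑ j, cw k j * ν j ^ p := Finset.sum_le_sum fun k _ => hJen k
      _ = ∑ j, (∑ k, cw k j) * ν j ^ p := by
          rw [Finset.sum_comm]
          exact Finset.sum_congr rfl fun j _ => (Finset.sum_mul _ _ _).symm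
      _ ≤ ∑ j, ν j ^ p := Finset.sum_le_sum fun j _ =>
          mul_le_of_le_one_left (Real.rpow_nonneg (hν0 j) p) (hrowB j)
  -- dead columns
  set Z : Fin m → ℕ :=
    fun k => (Finset.univ.filter fun j : Fin n => ∀ i, κ i = emb k → B' i j = 0).card with hZdef
  have hZn : ∀ k, Z k ≤ n := by
    intro k
    rw [hZdef]
    calc _ ≤ (Finset.univ : Finset (Fin n)).card := Finset.card_filter_le _ _
      _ = n := by simp
  have hdz : ∀ k, (bsz:ℝ) * (Z k : ℝ) ≤ d k := by
    intro k
    have htk : ∀ j : Fin n, (∀ i, κ i = emb k → B' i j = 0) → t k j ^ 2 = bsz := by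
      intro j hdead
      have h1 : t k j = (bsz:ℝ) * -(rb * H (emb k) j) := by
        rw [htdef]
        dsimp only
        calc ∑ i, u k i * E i j = ∑ i, (if κ i = emb k then -(rb * H (emb k) j) else 0) := by
              refine Finset.sum_congr rfl fun i _ => ?_
              rw [hudef]
              dsimp only
              by_cases h : κ i = emb k
              · rw [if_pos h, if_pos h]
                have hBij : B i j = H (emb k) j := by rw [hBrow, h]
                have hB'ij : B' i j = 0 := hdead i h
                rw [hEdef, Matrix.sub_apply, hB'ij, hBij]
                ring
              · rw [if_neg h, if_neg h, zero_mul]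
          _ = ∑ i ∈ Finset.univ.filter (fun i => κ i = emb k), -(rb * H (emb k) j) :=
              (Finset.sum_filter _ _).symm
          _ = ((Finset.univ.filter fun i : Fin n => κ i = emb k).card : ℝ)
                * -(rb * H (emb k) j) := by rw [Finset.sum_const, nsmul_eq_mul]
          _ = (bsz:ℝ) * -(rb * H (emb k) j) := by rw [hfibκ (emb k) (hembm k)]
      rw [h1]
      have h2 : ((bsz:ℝ) * -(rb * H (emb k) j)) ^ 2
          = (bsz:ℝ) * (bsz:ℝ) * (rb * rb) * (H (emb k) j * H (emb k) j) := by ring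
      rw [h2, hrb2, hH1, mul_one]
      field_simp
    have hcard : (((Finset.univ.filter (fun j : Fin n => ∀ i, κ i = emb k → B' i j = 0)).card : ℕ) : ℝ)
        = (Z k : ℝ) := rfl
    calc (bsz:ℝ) * (Z k : ℝ)
        = ∑ _j ∈ Finset.univ.filter (fun j : Fin n => ∀ i, κ i = emb k → B' i j = 0), (bsz:ℝ) := by
          rw [Finset.sum_const, nsmul_eq_mul, hcard]
          ring
      _ = ∑ j ∈ Finset.univ.filter (fun j : Fin n => ∀ i, κ i = emb k → B' i j = 0), t k j ^ 2 := by
          refine Finset.sum_congr rfl fun j hj => ?_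
          exact (htk j (Finset.mem_filter.mp hj).2).symm
      _ ≤ ∑ j, t k j ^ 2 :=
          Finset.sum_le_sum_of_subset_of_nonneg (Finset.filter_subset _ _)
            (fun j _ _ => sq_nonneg _)
      _ = d k := rfl
  -- combine everything
  have hchain : ∑ k, ((Z k : ℝ)) ^ p ≤ (m:ℝ) * ((n:ℝ)/16) ^ p := by
    have hZb : (bsz:ℝ)^p * ∑ k, ((Z k:ℝ))^p ≤ (bsz:ℝ)^p * ((m:ℝ) * ((n:ℝ)/16)^p) := by
      calc (bsz:ℝ)^p * ∑ k, ((Z k:ℝ))^p = ∑ k, ((bsz:ℝ)*(Z k:ℝ))^p := by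
            rw [Finset.mul_sum]
            exact Finset.sum_congr rfl fun k _ =>
              (Real.mul_rpow hbRpos.le (Nat.cast_nonneg _)).symm
        _ ≤ ∑ k, d k ^ p := Finset.sum_le_sum fun k _ =>
            Real.rpow_le_rpow (mul_nonneg hbRpos.le (Nat.cast_nonneg _)) (hdz k) hp0.le
        _ ≤ ∑ j, ν j ^ p := hsum_dp
        _ ≤ (m:ℝ) * (((n:ℝ)*bsz)^p * (1/16:ℝ)^p) := hbudget
        _ = (bsz:ℝ)^p * ((m:ℝ) * ((n:ℝ)/16)^p) := by
            rw [Real.mul_rpow hnR.le hbRpos.le, show (n:ℝ)/16 = (n:ℝ)*(1/16) by ring,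
              Real.mul_rpow hnR.le (by norm_num)]
            ring
    exact le_of_mul_le_mul_left hZb (Real.rpow_pos_of_pos hbRpos p)
  have hZsum : ∑ k, (Z k : ℝ) ≤ (m:ℝ) * ((n:ℝ)/16) := by
    have hmean := jensenRpow Finset.univ (fun _ : Fin m => (m:ℝ)⁻¹) (fun k => (Z k : ℝ))
      (fun k _ => by positivity) (fun k _ => Nat.cast_nonneg _)
      (by
        rw [Finset.sum_const, nsmul_eq_mul]
        simp only [Finset.card_univ, Fintype.card_fin]
        rw [mul_inv_cancel₀ (ne_of_gt hmR)]) hp1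
    have hmean2 : ∑ k, (m:ℝ)⁻¹ * ((Z k:ℝ)) ^ p ≤ ((n:ℝ)/16) ^ p := by
      calc ∑ k, (m:ℝ)⁻¹ * ((Z k:ℝ)) ^ p = (m:ℝ)⁻¹ * ∑ k, ((Z k:ℝ)) ^ p := by
            rw [Finset.mul_sum]
        _ ≤ (m:ℝ)⁻¹ * ((m:ℝ) * ((n:ℝ)/16) ^ p) :=
            mul_le_mul_of_nonneg_left hchain (by positivity)
        _ = ((n:ℝ)/16) ^ p := by field_simp
    have hmean3 : ((m:ℝ)⁻¹ * ∑ k, (Z k : ℝ)) ^ p ≤ ((n:ℝ)/16) ^ p := by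
      calc ((m:ℝ)⁻¹ * ∑ k, (Z k : ℝ)) ^ p = (∑ k, (m:ℝ)⁻¹ * (Z k : ℝ)) ^ p := by
            rw [Finset.mul_sum]
        _ ≤ ∑ k, (m:ℝ)⁻¹ * ((Z k:ℝ)) ^ p := hmean
        _ ≤ ((n:ℝ)/16) ^ p := hmean2
    by_contra hcon
    push_neg at hcon
    have hlt : (n:ℝ)/16 < (m:ℝ)⁻¹ * ∑ k, (Z k : ℝ) := by
      rw [lt_inv_mul_iff₀ hmR]
      linarith
    have := Real.rpow_lt_rpow (by positivity) hlt hp0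
    linarith
  -- lower-bounding nnz
  set D : Finset (Fin m × Fin n) :=
    Finset.univ.filter (fun kj : Fin m × Fin n => ¬ ∀ i, κ i = emb kj.1 → B' i kj.2 = 0)
    with hDdef
  have hDcard : D.card = ∑ k : Fin m, (n - Z k) := by
    rw [hDdef, Finset.card_filter, Fintype.sum_prod_type]
    refine Finset.sum_congr rfl fun k _ => ?_
    dsimp only
    rw [← Finset.card_filter]
    have hsum := Finset.card_filter_add_card_filter_not
      (s := (Finset.univ : Finset (Fin n))) (p := fun j => ∀ i, κ i = emb k → B' i j = 0)
    have hcu : (Finset.univ : Finset (Fin n)).card = n := by simp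
    rw [hcu] at hsum
    have hZk : Z k = (Finset.univ.filter (fun j : Fin n => ∀ i, κ i = emb k → B' i j = 0)).card := rfl
    omega
  have hDle : D.card ≤ nnz B' := by
    unfold nnz
    refine Finset.card_le_card_of_injOn
      (fun kj => (if h : ∃ i, κ i = emb kj.1 ∧ B' i kj.2 ≠ 0 then h.choose else ⟨0, hn0⟩, kj.2))
      ?_ ?_
    · intro kj hkj
      have hnd := (Finset.mem_filter.mp hkj).2
      push_neg at hnd
      have hex : ∃ i, κ i = emb kj.1 ∧ B' i kj.2 ≠ 0 := hnd
      dsimp only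
      rw [dif_pos hex]
      refine Finset.mem_filter.mpr ⟨Finset.mem_univ _, ?_⟩
      exact hex.choose_spec.2
    · intro kj hkj kj' hkj' heq
      have hnd := (Finset.mem_filter.mp (Finset.mem_coe.mp hkj)).2
      push_neg at hnd
      have hex : ∃ i, κ i = emb kj.1 ∧ B' i kj.2 ≠ 0 := hnd
      have hnd' := (Finset.mem_filter.mp (Finset.mem_coe.mp hkj')).2
      push_neg at hnd'
      have hex' : ∃ i, κ i = emb kj'.1 ∧ B' i kj'.2 ≠ 0 := hnd'
      dsimp only at heq
      rw [dif_pos hex, dif_pos hex'] at heq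
      have h2 : kj.2 = kj'.2 := (Prod.ext_iff.mp heq).2
      have h1 : hex.choose = hex'.choose := (Prod.ext_iff.mp heq).1
      have hk1 : κ hex.choose = emb kj.1 := hex.choose_spec.1
      have hk2 : κ hex'.choose = emb kj'.1 := hex'.choose_spec.1
      rw [h1, hk2] at hk1
      exact Prod.ext (hembinj _ _ hk1.symm) h2
  have hDcast : ((D.card : ℕ) : ℝ) = (n:ℝ) * m - ∑ k, (Z k : ℝ) := by
    rw [hDcard, Nat.cast_sum]
    calc ∑ k : Fin m, ((n - Z k : ℕ) : ℝ) = ∑ k : Fin m, ((n:ℝ) - (Z k : ℝ)) := by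
          refine Finset.sum_congr rfl fun k _ => ?_
          rw [Nat.cast_sub (hZn k)]
      _ = (n:ℝ) * m - ∑ k, (Z k : ℝ) := by
          rw [Finset.sum_sub_distrib, Finset.sum_const, nsmul_eq_mul]
          simp only [Finset.card_univ, Fintype.card_fin]
          ring
  have hfinal : (n:ℝ) * m - (m:ℝ) * ((n:ℝ)/16) ≤ (nnz B' : ℝ) := by
    calc (n:ℝ) * m - (m:ℝ) * ((n:ℝ)/16) ≤ (n:ℝ) * m - ∑ k, (Z k : ℝ) := by linarith
      _ = ((D.card : ℕ) : ℝ) := hDcast.symm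
      _ ≤ (nnz B' : ℝ) := Nat.cast_le.mpr hDle
  have hnmpos : (0:ℝ) < (n:ℝ) * m := mul_pos hnR hmR
  linarith
end

section
/- Let 1 ≤ p < q ≤ 2 be reals and n ≥ 2, let J_n ∈ ℝ^{n×n} be the all-ones matrix, and set A = I + n^{1/q−1}·J_n. Then for every ε with n^{−(1/p − 1/q)} < ε < 1/2: the identity matrix I satisfies ‖A − I‖_{S_p} < 2ε‖A‖_{S_p} and nnz(I) = n, while every Ã ∈ ℝ^{n×n} with ‖A − Ã‖_{S_q} ≤ 0.1‖A‖_{S_q} satisfies nnz(Ã) ≥ 0.96·n² − n. -/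
open scoped BigOperators ENNReal
open Matrix

lemma my_trace_eq_sum_eigs {n : ℕ} {M : Matrix (Fin n) (Fin n) ℝ} (hM : M.IsHermitian) :
    M.trace = ∑ i, hM.eigenvalues i := by
  rw [hM.trace_eq_sum_eigenvalues]
  simp

lemma my_eig_dichotomy {n : ℕ} {a b : ℝ}
    {J M : Matrix (Fin n) (Fin n) ℝ} (hJ : ∀ i j, J i j = 1)
    (hM : M.IsHermitian) (hMeq : M = a • (1 : Matrix (Fin n) (Fin n) ℝ) + b • J)
    (j : Fin n) : hM.eigenvalues j = a ∨ hM.eigenvalues j = a + b * n := by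
  set lam := hM.eigenvalues j with hlam
  set v : Fin n → ℝ := ⇑(hM.eigenvectorBasis j) with hv
  have hv0 : v ≠ 0 := by
    intro h
    apply hM.eigenvectorBasis.orthonormal.ne_zero j
    ext k
    exact congrFun h k
  have hkey : M *ᵥ v = lam • v := hM.mulVec_eigenvectorBasis j
  have hS : ∀ i : Fin n, (lam - a) * v i = b * (∑ k, v k) := by
    intro i
    have h1 : (M *ᵥ v) i = lam * v i := by rw [hkey]; rfl
    have h2 : (M *ᵥ v) i = a * v i + b * (∑ k, v k) := by
      rw [hMeq]
      simp [Matrix.mulVec, dotProduct, Matrix.one_apply, hJ, mul_add, add_mul,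
        Finset.sum_add_distrib, Finset.mul_sum, Finset.sum_ite_eq' (Finset.univ) i v]
    nlinarith [h1, h2]
  by_cases hla : lam = a
  · exact Or.inl hla
  · right
    obtain ⟨i₀, hi₀⟩ : ∃ i, v i ≠ 0 := by
      by_contra h
      push_neg at h
      exact hv0 (funext h)
    have hconst : ∀ i, v i = v i₀ := by
      intro i
      have := hS i
      rw [← hS i₀] at this
      exact mul_left_cancel₀ (sub_ne_zero.mpr hla) this
    have hsum : (∑ k, v k) = n * v i₀ := by
      rw [Finset.sum_congr rfl (fun i _ => hconst i)]
      simp [mul_comm]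
    have h5 := hS i₀
    rw [hsum] at h5
    have : (lam - a) = b * n := by
      have h' : (lam - a) * v i₀ = b * n * v i₀ := by linarith [h5]
      exact mul_right_cancel₀ hi₀ h'
    linarith

lemma my_eig_structure {n : ℕ} {a b : ℝ} (hb : b ≠ 0) (hn : 0 < n)
    {J M : Matrix (Fin n) (Fin n) ℝ} (hJ : ∀ i j, J i j = 1)
    (hM : M.IsHermitian) (hMeq : M = a • (1 : Matrix (Fin n) (Fin n) ℝ) + b • J) :
    ∃ j₀ : Fin n, hM.eigenvalues j₀ = a + b * n ∧
      ∀ j, j ≠ j₀ → hM.eigenvalues j = a := by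
  classical
  set e := hM.eigenvalues with he
  have htr : M.trace = n * (a + b) := by
    rw [hMeq]
    simp [Matrix.trace, Matrix.diag, Matrix.one_apply, hJ]
    ring
  have hsum : ∑ i, e i = n * (a + b) := by rw [← my_trace_eq_sum_eigs hM, htr]
  have hbn : b * n ≠ 0 := mul_ne_zero hb (Nat.cast_ne_zero.mpr hn.ne')
  set s : Finset (Fin n) := Finset.univ.filter (fun j => e j = a + b * n) with hs
  have hle : s.card ≤ n := by
    simpa using Finset.card_filter_le Finset.univ (fun j => e j = a + b * n)
  have h1 : ∑ i ∈ Finset.univ.filter (fun j => e j = a + b * n), e i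
      = (s.card : ℝ) * (a + b * n) := by
    rw [Finset.sum_congr rfl (fun i hi => (Finset.mem_filter.mp hi).2),
      Finset.sum_const, nsmul_eq_mul, hs]
  have h2 : ∑ i ∈ Finset.univ.filter (fun j => ¬ e j = a + b * n), e i
      = ((n : ℝ) - s.card) * a := by
    rw [Finset.sum_congr rfl (fun i hi => by
      rcases my_eig_dichotomy hJ hM hMeq i with h | h
      · exact h
      · exact absurd h (Finset.mem_filter.mp hi).2)]
    rw [Finset.sum_const, nsmul_eq_mul]
    have hcard : (Finset.univ.filter (fun j => ¬ e j = a + b * n)).card = n - s.card := by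
      have := Finset.card_filter_add_card_filter_not
        (s := (Finset.univ : Finset (Fin n))) (p := fun j => e j = a + b * n)
      simp only [Finset.card_univ, Fintype.card_fin] at this
      have h3 : s.card = (Finset.univ.filter (fun j => e j = a + b * n)).card := by rw [hs]
      omega
    rw [hcard]
    rw [Nat.cast_sub hle]
  have hsplit : ∑ i, e i = (s.card : ℝ) * (a + b * n) + ((n : ℝ) - s.card) * a := by
    rw [← Finset.sum_filter_add_sum_filter_not Finset.univ (fun j => e j = a + b * n), h1, h2]
  have hc1 : (s.card : ℝ) * (b * n) = 1 * (b * n) := by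
    rw [hsplit] at hsum; ring_nf; ring_nf at hsum; linarith
  have hcard1 : s.card = 1 := by
    have := mul_right_cancel₀ hbn hc1
    exact_mod_cast this
  obtain ⟨j₀, hj₀⟩ := Finset.card_eq_one.mp hcard1
  refine ⟨j₀, ?_, ?_⟩
  · have : j₀ ∈ s := by rw [hj₀]; exact Finset.mem_singleton_self j₀
    exact (Finset.mem_filter.mp this).2
  · intro j hj
    rcases my_eig_dichotomy hJ hM hMeq j with h | h
    · exact h
    · exfalso
      apply hj
      have : j ∈ s := Finset.mem_filter.mpr ⟨Finset.mem_univ j, h⟩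
      rw [hj₀] at this
      exact Finset.mem_singleton.mp this

lemma my_real_rpow_superadd {x y r : ℝ} (hx : 0 ≤ x) (hy : 0 ≤ y) (hr : 1 ≤ r) :
    x ^ r + y ^ r ≤ (x + y) ^ r := by
  have h := NNReal.add_rpow_le_rpow_add (x.toNNReal) (y.toNNReal) hr
  have := NNReal.coe_le_coe.mpr h
  push_cast [NNReal.coe_rpow, Real.coe_toNNReal _ hx, Real.coe_toNNReal _ hy] at this
  convert this using 2

lemma my_sum_rpow_superadd {ι : Type*} (s : Finset ι) (f : ι → ℝ) (hf : ∀ i, 0 ≤ f i)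
    {r : ℝ} (hr : 1 ≤ r) : ∑ i ∈ s, f i ^ r ≤ (∑ i ∈ s, f i) ^ r := by
  classical
  induction s using Finset.induction with
  | empty => simp [Real.zero_rpow (by linarith : r ≠ 0)]
  | @insert a s' ha ih =>
    rw [Finset.sum_insert ha, Finset.sum_insert ha]
    calc f a ^ r + ∑ i ∈ s', f i ^ r ≤ f a ^ r + (∑ i ∈ s', f i) ^ r := by linarith [ih]
    _ ≤ (f a + ∑ i ∈ s', f i) ^ r :=
        my_real_rpow_superadd (hf a) (Finset.sum_nonneg fun i _ => hf i) hr

lemma my_real_rpow_convex2 {t r : ℝ} (ht : 0 ≤ t) (hr : 1 ≤ r) :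
    (1 + t) ^ r ≤ 2 ^ (r - 1) * (1 + t ^ r) := by
  have h := NNReal.rpow_add_le_mul_rpow_add_rpow 1 (t.toNNReal) hr
  have := NNReal.coe_le_coe.mpr h
  push_cast [NNReal.coe_rpow, Real.coe_toNNReal _ ht] at this
  simpa using this

lemma my_sum_structured {n : ℕ} (g : Fin n → ℝ) (j₀ : Fin n) {x y : ℝ}
    (h0 : g j₀ = x) (h1 : ∀ j, j ≠ j₀ → g j = y) : ∑ j, g j = x + ((n : ℝ) - 1) * y := by
  rw [← Finset.add_sum_erase _ _ (Finset.mem_univ j₀), h0]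
  congr 1
  rw [Finset.sum_congr rfl (fun j hj => h1 j (Finset.ne_of_mem_erase hj)), Finset.sum_const,
    Finset.card_erase_of_mem (Finset.mem_univ j₀), nsmul_eq_mul]
  congr 1
  have : 0 < n := j₀.pos
  simp [Nat.cast_sub this]


-- extra aux depending on singVals (to be appended after defs)
lemma my_frob {n : ℕ} (M : Matrix (Fin n) (Fin n) ℝ) :
    ∑ j, singVals M j ^ (2:ℝ) = ∑ j, ∑ i, (M i j)^2 := by
  have hpsd : (Mᵀ * M).PosSemidef := by
    simpa using Matrix.posSemidef_conjTranspose_mul_self M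
  have heig : ∀ j, 0 ≤ (Matrix.isHermitian_conjTranspose_mul_self M).eigenvalues j :=
    fun j => hpsd.eigenvalues_nonneg j
  have h1 : ∀ j, singVals M j ^ (2:ℝ)
      = (Matrix.isHermitian_conjTranspose_mul_self M).eigenvalues j := by
    intro j
    rw [singVals, show (2:ℝ) = ((2:ℕ):ℝ) by norm_num, Real.rpow_natCast, Real.sq_sqrt (heig j)]
  rw [Finset.sum_congr rfl (fun j _ => h1 j), ← my_trace_eq_sum_eigs]
  simp [Matrix.trace, Matrix.diag, Matrix.mul_apply, Matrix.transpose_apply, sq]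

set_option maxHeartbeats 2000000 in
/-- hard instance for `1 ≤ p < q ≤ 2`: `A = I + n^{1/q-1}·J_n`. -/
theorem stmt12 (p q : ℝ) (hp : 1 ≤ p) (hpq : p < q) (hq : q ≤ 2)
    (n : ℕ) (hn : 2 ≤ n)
    (J : Matrix (Fin n) (Fin n) ℝ) (hJ : ∀ i j, J i j = 1)
    (A : Matrix (Fin n) (Fin n) ℝ) (hA : A = 1 + (n : ℝ) ^ (1 / q - 1) • J)
    (ε : ℝ) (hε1 : (n : ℝ) ^ (-(1 / p - 1 / q)) < ε) (hε2 : ε < 1 / 2) :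
    schattenF p (A - 1) < 2 * ε * schattenF p A ∧
    nnz (1 : Matrix (Fin n) (Fin n) ℝ) = n ∧
    ∀ At : Matrix (Fin n) (Fin n) ℝ,
      schattenF q (A - At) ≤ 0.1 * schattenF q A →
      0.96 * (n : ℝ) ^ 2 - n ≤ (nnz At : ℝ) := by
  classical
  have hn0 : 0 < n := by omega
  have hnRpos : (0:ℝ) < n := by exact_mod_cast hn0
  have hnR : (1:ℝ) ≤ n := by exact_mod_cast (by omega : 1 ≤ n)
  have hp0 : 0 < p := by linarith
  have hq1 : 1 ≤ q := by linarith
  have hq0 : 0 < q := by linarith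
  have hqne : q ≠ 0 := ne_of_gt hq0
  set c : ℝ := (n:ℝ) ^ (1/q - 1) with hc
  have hcpos : 0 < c := Real.rpow_pos_of_pos hnRpos _
  have hcn : c * (n:ℝ) = (n:ℝ) ^ (1/q) := by
    rw [hc, show (1/q - 1) = 1/q + (-1) by ring, Real.rpow_add hnRpos, Real.rpow_neg_one]
    field_simp
  have hcnpos : 0 < c * (n:ℝ) := by positivity
  have hA1 : A - 1 = c • J := by rw [hA]; exact add_sub_cancel_left 1 _
  have hM1 : (A - 1)ᵀ * (A - 1)
      = (0:ℝ) • (1 : Matrix (Fin n) (Fin n) ℝ) + (c*c*(n:ℝ)) • J := by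
    rw [hA1]
    ext i k
    simp [Matrix.mul_apply, Matrix.transpose_apply, hJ, Finset.sum_const, Finset.card_univ]
    ring
  obtain ⟨j₁, hj₁, hj₁'⟩ := my_eig_structure (a := 0) (b := c*c*(n:ℝ)) (by positivity) hn0 hJ
    (Matrix.isHermitian_conjTranspose_mul_self (A - 1)) hM1
  have hsv1 : singVals (A - 1) j₁ = c * n := by
    rw [singVals, hj₁, show (0:ℝ) + c*c*(n:ℝ)*(n:ℝ) = (c*(n:ℝ))^2 by ring,
      Real.sqrt_sq (le_of_lt hcnpos)]
  have hsv1' : ∀ j, j ≠ j₁ → singVals (A - 1) j = 0 := fun j hj => by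
    rw [singVals, hj₁' j hj, Real.sqrt_zero]
  have hM2 : Aᵀ * A
      = (1:ℝ) • (1 : Matrix (Fin n) (Fin n) ℝ) + (2*c + c*c*(n:ℝ)) • J := by
    rw [hA]
    ext i k
    simp [Matrix.mul_apply, Matrix.transpose_apply, Matrix.one_apply, hJ, add_mul, mul_add,
      Finset.sum_add_distrib, Finset.sum_ite_eq, Finset.sum_ite_eq', Finset.sum_const,
      Finset.card_univ, mul_ite, ite_mul]
    by_cases hik : i = k <;> simp [hik] <;> ring
  obtain ⟨j₂, hj₂, hj₂'⟩ := my_eig_structure (a := 1) (b := 2*c + c*c*(n:ℝ)) (by positivity) hn0 hJ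
    (Matrix.isHermitian_conjTranspose_mul_self A) hM2
  have hsv2 : singVals A j₂ = 1 + c * n := by
    rw [singVals, hj₂, show (1:ℝ) + (2*c + c*c*(n:ℝ))*(n:ℝ) = (1 + c*(n:ℝ))^2 by ring,
      Real.sqrt_sq (by positivity)]
  have hsv2' : ∀ j, j ≠ j₂ → singVals A j = 1 := fun j hj => by
    rw [singVals, hj₂' j hj, Real.sqrt_one]
  have hsumA : ∀ r : ℝ, ∑ j, singVals A j ^ r = (1 + c*(n:ℝ))^r + ((n:ℝ)-1) := by
    intro r
    have := my_sum_structured (fun j => singVals A j ^ r) j₂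
      (x := (1 + c*(n:ℝ))^r) (y := 1) (by simp [hsv2])
      (fun j hj => by simp [hsv2' j hj, Real.one_rpow])
    simpa using this
  have hsum1 : ∀ r : ℝ, r ≠ 0 → ∑ j, singVals (A - 1) j ^ r = (c*(n:ℝ))^r := by
    intro r hr
    have := my_sum_structured (fun j => singVals (A - 1) j ^ r) j₁
      (x := (c*(n:ℝ))^r) (y := 0) (by simp [hsv1])
      (fun j hj => by simp [hsv1' j hj, Real.zero_rpow hr])
    simpa using this
  clear hM1 hM2 hj₁' hj₂' hj₁ hj₂ hsv1 hsv1' hsv2 hsv2' hA1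
  -- Part 1
  have hschatten1 : schattenF p (A - 1) = c * n := by
    rw [schattenF, hsum1 p (ne_of_gt hp0),
      ← Real.rpow_mul (le_of_lt hcnpos), mul_one_div_cancel (ne_of_gt hp0), Real.rpow_one]
  have hApos : (n:ℝ) ^ (1/p) ≤ schattenF p A := by
    have h1 : (1:ℝ) ≤ (1 + c*(n:ℝ))^p := Real.one_le_rpow (by linarith) (le_of_lt hp0)
    have h2 : (n:ℝ) ≤ (1 + c*(n:ℝ))^p + ((n:ℝ)-1) := by linarith
    rw [schattenF, hsumA p]
    exact Real.rpow_le_rpow (le_of_lt hnRpos) h2 (by positivity)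
  have hε0 : 0 < ε := lt_trans (Real.rpow_pos_of_pos hnRpos _) hε1
  have hkey : (n:ℝ)^(1/q) < ε * (n:ℝ)^(1/p) := by
    have h3 : (n:ℝ)^(-(1/p-1/q)) * (n:ℝ)^(1/p) = (n:ℝ)^(1/q) := by
      rw [← Real.rpow_add hnRpos]; ring_nf
    nlinarith [Real.rpow_pos_of_pos hnRpos (1/p)]
  have hpart1 : schattenF p (A - 1) < 2 * ε * schattenF p A := by
    rw [hschatten1]
    have hnp : (0:ℝ) < (n:ℝ)^(1/p) := Real.rpow_pos_of_pos hnRpos _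
    have h4 : ε * (n:ℝ)^(1/p) ≤ ε * schattenF p A :=
      mul_le_mul_of_nonneg_left hApos (le_of_lt hε0)
    have h5 : (0:ℝ) < ε * schattenF p A := mul_pos hε0 (lt_of_lt_of_le hnp hApos)
    calc c * (n:ℝ) = (n:ℝ)^(1/q) := hcn
    _ < ε * (n:ℝ)^(1/p) := hkey
    _ ≤ ε * schattenF p A := h4
    _ < 2 * ε * schattenF p A := by linarith
  -- Part 2
  have hpart2 : nnz (1 : Matrix (Fin n) (Fin n) ℝ) = n := by
    rw [nnz]
    have hset : (Finset.univ.filter fun ij : Fin n × Fin n =>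
        (1 : Matrix (Fin n) (Fin n) ℝ) ij.1 ij.2 ≠ 0) = (Finset.univ : Finset (Fin n)).diag := by
      ext ij
      simp only [Finset.mem_filter, Finset.mem_univ, true_and, Finset.mem_diag,
        Matrix.one_apply, ne_eq, ite_eq_right_iff, one_ne_zero]
      tauto
    rw [hset, Finset.diag_card, Finset.card_univ, Fintype.card_fin]
  refine ⟨hpart1, hpart2, ?_⟩
  -- Part 3
  intro At hAt
  set B := A - At with hB
  have hsvB : ∀ j, 0 ≤ singVals B j := fun j => Real.sqrt_nonneg _
  set Zs : Finset (Fin n × Fin n) :=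
    (Finset.univ : Finset (Fin n)).offDiag.filter (fun ij => At ij.1 ij.2 = 0) with hZs
  have hBentry : ∀ ij ∈ Zs, B ij.1 ij.2 = c := by
    intro ij hij
    have hmem := Finset.mem_filter.mp hij
    have hne : ij.1 ≠ ij.2 := (Finset.mem_offDiag.mp hmem.1).2.2
    rw [hB]
    simp [Matrix.sub_apply, hA, Matrix.one_apply_ne hne, hJ, hmem.2]
  have hfrob_lb : (Zs.card : ℝ) * (c*c) ≤ ∑ j, ∑ i, (B i j)^2 := by
    have hswap : ∑ j, ∑ i, (B i j)^2 = ∑ ij : Fin n × Fin n, (B ij.1 ij.2)^2 := by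
      rw [Finset.sum_comm]
      rw [← Finset.sum_product']
      rfl
    calc (Zs.card:ℝ)*(c*c) = ∑ ij ∈ Zs, (B ij.1 ij.2)^2 := by
          rw [Finset.sum_congr rfl (fun ij hij => by rw [hBentry ij hij]),
            Finset.sum_const, nsmul_eq_mul]
          ring
    _ ≤ ∑ ij : Fin n × Fin n, (B ij.1 ij.2)^2 :=
          Finset.sum_le_sum_of_subset_of_nonneg (Finset.subset_univ _)
            (fun i _ _ => sq_nonneg _)
    _ = ∑ j, ∑ i, (B i j)^2 := hswap.symm
  have hfrob_ub : ∑ j, ∑ i, (B i j)^2 ≤ (schattenF q B) ^ (2:ℝ) := by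
    rw [← my_frob B]
    have hstep : ∀ j : Fin n, singVals B j ^ (2:ℝ) = (singVals B j ^ q) ^ (2/q) := by
      intro j
      rw [← Real.rpow_mul (hsvB j)]
      congr 1
      field_simp
    rw [Finset.sum_congr rfl (fun j _ => hstep j)]
    have hr21 : (1:ℝ) ≤ 2/q := (one_le_div hq0).mpr hq
    calc ∑ j, (singVals B j ^ q)^(2/q) ≤ (∑ j, singVals B j ^ q)^(2/q) :=
          my_sum_rpow_superadd _ _ (fun j => Real.rpow_nonneg (hsvB j) q) hr21
    _ = (schattenF q B) ^ (2:ℝ) := by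
          rw [schattenF, ← Real.rpow_mul (Finset.sum_nonneg fun j _ =>
            Real.rpow_nonneg (hsvB j) q)]
          congr 1
          field_simp
  have hAq : schattenF q A ≤ 2 * (n:ℝ)^(1/q) := by
    rw [schattenF, hsumA q]
    have ht1 : (1:ℝ) ≤ c*(n:ℝ) := by rw [hcn]; exact Real.one_le_rpow hnR (by positivity)
    have hconv := my_real_rpow_convex2 (t := c*(n:ℝ)) (by positivity) hq1
    have htq : (c*(n:ℝ))^q = (n:ℝ) := by
      rw [hcn, ← Real.rpow_mul (le_of_lt hnRpos), one_div_mul_cancel hqne, Real.rpow_one]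
    have h2q : (2:ℝ)^q = 2^(q-1) * 2 := by
      rw [show q = (q-1) + 1 by ring, Real.rpow_add (by norm_num : (0:ℝ) < 2)]
      norm_num
    have h21 : (1:ℝ) ≤ 2^(q-1) := Real.one_le_rpow one_le_two (by linarith)
    have hbound : (1 + c*(n:ℝ))^q + ((n:ℝ)-1) ≤ 2^q * (n:ℝ) := by
      nlinarith [mul_nonneg (sub_nonneg.mpr h21) (sub_nonneg.mpr hnR)]
    have hsum_nonneg : (0:ℝ) ≤ (1 + c*(n:ℝ))^q + ((n:ℝ)-1) := by
      have := Real.rpow_nonneg (by positivity : (0:ℝ) ≤ 1 + c*(n:ℝ)) q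
      linarith
    calc ((1 + c*(n:ℝ))^q + ((n:ℝ)-1))^(1/q) ≤ (2^q * (n:ℝ))^(1/q) :=
          Real.rpow_le_rpow hsum_nonneg hbound (by positivity)
    _ = 2 * (n:ℝ)^(1/q) := by
          rw [Real.mul_rpow (Real.rpow_nonneg (by norm_num) q) (le_of_lt hnRpos),
            ← Real.rpow_mul (by norm_num : (0:ℝ) ≤ 2), mul_one_div_cancel hqne, Real.rpow_one]
  have hsBnn : (0:ℝ) ≤ schattenF q B :=
    Real.rpow_nonneg (Finset.sum_nonneg fun j _ => Real.rpow_nonneg (hsvB j) q) _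
  have hsAnn : (0:ℝ) ≤ schattenF q A :=
    Real.rpow_nonneg (Finset.sum_nonneg fun j _ =>
      Real.rpow_nonneg (Real.sqrt_nonneg _) q) _
  have h1 : (schattenF q B)^(2:ℝ) ≤ (0.1 * schattenF q A)^(2:ℝ) :=
    Real.rpow_le_rpow hsBnn hAt (by norm_num)
  have h2 : (0.1 * schattenF q A)^(2:ℝ) ≤ (0.1 * (2 * (n:ℝ)^(1/q)))^(2:ℝ) :=
    Real.rpow_le_rpow (by positivity)
      (mul_le_mul_of_nonneg_left hAq (by norm_num)) (by norm_num)
  have hnq_nonneg : (0:ℝ) ≤ (n:ℝ)^(1/q) := Real.rpow_nonneg (le_of_lt hnRpos) _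
  have h3 : (0.1 * (2 * (n:ℝ)^(1/q)))^(2:ℝ) = 0.04 * ((n:ℝ)^(1/q))^(2:ℝ) := by
    rw [show (0.1 : ℝ) * (2 * (n:ℝ)^(1/q)) = 0.2 * (n:ℝ)^(1/q) by ring,
      Real.mul_rpow (by norm_num) hnq_nonneg,
      show (2:ℝ) = ((2:ℕ):ℝ) by norm_num, Real.rpow_natCast]
    norm_num
  have h4 : ((n:ℝ)^(1/q))^(((2:ℕ)):ℝ) = (c*c) * ((n:ℝ)^(2:ℕ)) := by
    rw [← Real.rpow_natCast (n:ℝ) 2, hc, ← Real.rpow_add hnRpos, ← Real.rpow_add hnRpos,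
      ← Real.rpow_mul (le_of_lt hnRpos)]
    congr 1
    push_cast
    ring
  have h4' : ((n:ℝ)^(1/q))^((2:ℝ)) = (c*c) * ((n:ℝ)^(2:ℕ)) := by
    rw [show (2:ℝ) = ((2:ℕ):ℝ) by norm_num, h4]
  have hccpos : (0:ℝ) < c * c := by positivity
  have hZcard : (Zs.card:ℝ) ≤ 0.04 * (n:ℝ)^2 := by
    have e1 : (0.04 : ℝ) * ((n:ℝ)^(1/q))^((2:ℝ)) = (0.04 * (n:ℝ)^2) * (c*c) := by
      rw [h4']; ring
    have hZcc : (Zs.card:ℝ) * (c*c) ≤ (0.04 * (n:ℝ)^2) * (c*c) :=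
      le_trans hfrob_lb (le_trans hfrob_ub (le_trans h1 (le_trans h2
        (le_of_eq (h3.trans e1)))))
    exact le_of_mul_le_mul_right hZcc hccpos
  have hoffcard : (Finset.univ : Finset (Fin n)).offDiag.card = n*n - n := by
    rw [Finset.offDiag_card, Finset.card_univ, Fintype.card_fin]
  have hZle : Zs.card ≤ n*n - n := by
    rw [← hoffcard, hZs]
    exact Finset.card_filter_le _ _
  have hnnz : n*n - n - Zs.card ≤ nnz At := by
    rw [nnz]
    have hsub : (Finset.univ : Finset (Fin n)).offDiag.filter (fun ij => ¬ At ij.1 ij.2 = 0)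
        ⊆ Finset.univ.filter (fun ij : Fin n × Fin n => At ij.1 ij.2 ≠ 0) := by
      intro ij hij
      simp only [Finset.mem_filter, Finset.mem_univ, true_and, ne_eq]
      exact (Finset.mem_filter.mp hij).2
    have hcle := Finset.card_le_card hsub
    have hadd := Finset.card_filter_add_card_filter_not
      (s := (Finset.univ : Finset (Fin n)).offDiag) (p := fun ij => At ij.1 ij.2 = 0)
    have hZc : Zs.card
        = ((Finset.univ : Finset (Fin n)).offDiag.filter (fun ij => At ij.1 ij.2 = 0)).card := by
      rw [hZs]
    omega
  have hnnzR : ((n:ℝ)*(n:ℝ) - (n:ℝ)) - (Zs.card:ℝ) ≤ (nnz At : ℝ) := by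
    have hcast : ((n*n - n - Zs.card : ℕ) : ℝ) = (n:ℝ)*(n:ℝ) - (n:ℝ) - (Zs.card:ℝ) := by
      have hle1 : n ≤ n*n := Nat.le_mul_of_pos_left _ hn0
      rw [Nat.cast_sub (by omega), Nat.cast_sub hle1]
      push_cast
      ring
    rw [← hcast]
    exact_mod_cast hnnz
  have hsq : (n:ℝ)^2 = (n:ℝ)*(n:ℝ) := by ring
  clear_value B Zs
  clear hBentry hAt hfrob_lb hfrob_ub h1 h2 h3 h4 h4' hsumA hsum1 hA hJ hB hZs
  linarith [hZcard, hnnzR]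
end

section
/- Let p > 0 be real, let 0 < ε ≤ 1/2, and let ε₁, ε₂ > 0. Suppose B ∈ {0,1}^{n×n} is rigid in the sense that every matrix S ∈ ℝ^{n×n} with nnz(S) < ε₂·n² satisfies rank(B − S) > ε₁·n. Let A = (n/ε)·I + B. Then: (a) ‖A − (n/ε)·I‖_{S_p} ≤ 2ε‖A‖_{S_p}, and nnz((n/ε)·I) = n; (b) A has rank n; (c) every matrix Ã ∈ ℝ^{n×n} with rank(A − Ã) ≤ ε₁·rank(A) satisfies nnz(Ã) ≥ ε₂·n² − n. -/
open scoped BigOperators ENNReal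
open Matrix

section Aux

lemma sqrtNormEq {n : ℕ} (y : Fin n → ℝ) :
    Real.sqrt (∑ i, y i ^ 2) = ‖(WithLp.equiv 2 (Fin n → ℝ)).symm y‖ := by
  rw [EuclideanSpace.norm_eq]
  simp [sq_abs]

lemma singVals_exists_vec {n : ℕ} (M : Matrix (Fin n) (Fin n) ℝ) (j : Fin n) :
    ∃ v : Fin n → ℝ, v ≠ 0 ∧
      Real.sqrt (∑ i, (M *ᵥ v) i ^ 2) = singVals M j * Real.sqrt (∑ i, v i ^ 2) := by
  have hH := Matrix.isHermitian_conjTranspose_mul_self M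
  refine ⟨⇑(hH.eigenvectorBasis j), ?_, ?_⟩
  · intro h
    exact hH.eigenvectorBasis.orthonormal.ne_zero j (by ext i; exact congrFun h i)
  · set v : Fin n → ℝ := ⇑(hH.eigenvectorBasis j) with hv
    have heig : (Mᵀ * M) *ᵥ v = hH.eigenvalues j • v := hH.mulVec_eigenvectorBasis j
    have hps : (Mᵀ * M).PosSemidef := by
      have := Matrix.posSemidef_conjTranspose_mul_self M
      simpa using this
    have hμ : 0 ≤ hH.eigenvalues j := hps.eigenvalues_nonneg j
    have key : ∑ i, (M *ᵥ v) i ^ 2 = hH.eigenvalues j * ∑ i, v i ^ 2 := by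
      have h1 : (M *ᵥ v) ⬝ᵥ (M *ᵥ v) = v ⬝ᵥ ((Mᵀ * M) *ᵥ v) := by
        rw [← Matrix.mulVec_mulVec, Matrix.dotProduct_mulVec v, Matrix.vecMul_transpose]
      rw [heig, dotProduct_smul, smul_eq_mul] at h1
      simpa [dotProduct, pow_two] using h1
    rw [key, Real.sqrt_mul hμ]
    rfl

lemma sqrt_sum_sq_pos {n : ℕ} {v : Fin n → ℝ} (hv : v ≠ 0) :
    0 < Real.sqrt (∑ i, v i ^ 2) := by
  obtain ⟨i, hi⟩ := Function.ne_iff.mp hv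
  have : 0 < ∑ j, v j ^ 2 := by
    refine Finset.sum_pos' (fun j _ => sq_nonneg _) ⟨i, Finset.mem_univ i, ?_⟩
    have := pow_pos (abs_pos.mpr hi) 2
    rwa [sq_abs] at this
  exact Real.sqrt_pos.mpr this

lemma singVals_le_of_bound {n : ℕ} (M : Matrix (Fin n) (Fin n) ℝ) (K : ℝ)
    (hK : ∀ x : Fin n → ℝ,
      Real.sqrt (∑ i, (M *ᵥ x) i ^ 2) ≤ K * Real.sqrt (∑ i, x i ^ 2)) (j : Fin n) :
    singVals M j ≤ K := by
  obtain ⟨v, hv0, hv⟩ := singVals_exists_vec M j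
  exact le_of_mul_le_mul_right (hv ▸ hK v) (sqrt_sum_sq_pos hv0)

lemma le_singVals_of_bound {n : ℕ} (M : Matrix (Fin n) (Fin n) ℝ) (K : ℝ)
    (hK : ∀ x : Fin n → ℝ,
      K * Real.sqrt (∑ i, x i ^ 2) ≤ Real.sqrt (∑ i, (M *ᵥ x) i ^ 2)) (j : Fin n) :
    K ≤ singVals M j := by
  obtain ⟨v, hv0, hv⟩ := singVals_exists_vec M j
  exact le_of_mul_le_mul_right (hv ▸ hK v) (sqrt_sum_sq_pos hv0)

lemma bnorm_le {n : ℕ} (B : Matrix (Fin n) (Fin n) ℝ) (hB : ∀ i j, B i j = 0 ∨ B i j = 1)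
    (x : Fin n → ℝ) :
    Real.sqrt (∑ i, (B *ᵥ x) i ^ 2) ≤ (n : ℝ) * Real.sqrt (∑ i, x i ^ 2) := by
  have hsum : ∑ i, (B *ᵥ x) i ^ 2 ≤ (n : ℝ) ^ 2 * ∑ i, x i ^ 2 := by
    have hrow : ∀ i, (B *ᵥ x) i ^ 2 ≤ (n : ℝ) * ∑ j, x j ^ 2 := by
      intro i
      have h1 : (∑ j, B i j * x j) ^ 2 ≤ (n : ℝ) * ∑ j, (B i j * x j) ^ 2 := by
        simpa using sq_sum_le_card_mul_sum_sq (s := Finset.univ) (f := fun j => B i j * x j)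
      have h2 : ∑ j, (B i j * x j) ^ 2 ≤ ∑ j, x j ^ 2 := by
        refine Finset.sum_le_sum fun j _ => ?_
        rcases hB i j with h | h <;> simp [h, sq_nonneg]
      calc (B *ᵥ x) i ^ 2 = (∑ j, B i j * x j) ^ 2 := by simp [Matrix.mulVec, dotProduct]
        _ ≤ (n : ℝ) * ∑ j, (B i j * x j) ^ 2 := h1
        _ ≤ (n : ℝ) * ∑ j, x j ^ 2 := mul_le_mul_of_nonneg_left h2 (Nat.cast_nonneg n)
    calc ∑ i, (B *ᵥ x) i ^ 2 ≤ ∑ _i : Fin n, (n : ℝ) * ∑ j, x j ^ 2 :=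
          Finset.sum_le_sum fun i _ => hrow i
      _ = (n : ℝ) ^ 2 * ∑ j, x j ^ 2 := by
          rw [Finset.sum_const, Finset.card_univ, Fintype.card_fin, nsmul_eq_mul]; ring
  calc Real.sqrt (∑ i, (B *ᵥ x) i ^ 2) ≤ Real.sqrt ((n : ℝ) ^ 2 * ∑ i, x i ^ 2) :=
        Real.sqrt_le_sqrt hsum
    _ = (n : ℝ) * Real.sqrt (∑ i, x i ^ 2) := by
        rw [Real.sqrt_mul (sq_nonneg _), Real.sqrt_sq (Nat.cast_nonneg n)]

lemma anorm_ge {n : ℕ} (c : ℝ) (hc : (n : ℝ) ≤ c)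
    (B : Matrix (Fin n) (Fin n) ℝ) (hB : ∀ i j, B i j = 0 ∨ B i j = 1) (x : Fin n → ℝ) :
    (c - n) * Real.sqrt (∑ i, x i ^ 2) ≤
      Real.sqrt (∑ i, ((c • (1 : Matrix (Fin n) (Fin n) ℝ) + B) *ᵥ x) i ^ 2) := by
  have hAx : (c • (1 : Matrix (Fin n) (Fin n) ℝ) + B) *ᵥ x = c • x + B *ᵥ x := by
    rw [Matrix.add_mulVec, Matrix.smul_mulVec, Matrix.one_mulVec]
  set e := (WithLp.equiv 2 (Fin n → ℝ)).symm with he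
  have hsplit : e (c • x + B *ᵥ x) = c • e x + e (B *ᵥ x) := by
    rw [he]; rfl
  have hBx : ‖e (B *ᵥ x)‖ ≤ (n : ℝ) * ‖e x‖ := by
    rw [← sqrtNormEq, ← sqrtNormEq]; exact bnorm_le B hB x
  have htri : ‖c • e x‖ - ‖e (B *ᵥ x)‖ ≤ ‖c • e x + e (B *ᵥ x)‖ := by
    have := norm_add_le (c • e x + e (B *ᵥ x)) (-(e (B *ᵥ x)))
    simp only [add_neg_cancel_right, norm_neg] at this
    linarith
  have hcs : ‖c • e x‖ = c * ‖e x‖ := by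
    rw [norm_smul, Real.norm_eq_abs, abs_of_nonneg (le_trans (Nat.cast_nonneg n) hc)]
  rw [hAx, sqrtNormEq, sqrtNormEq, ← he, hsplit]
  calc (c - n) * ‖e x‖ = c * ‖e x‖ - (n : ℝ) * ‖e x‖ := by ring
    _ ≤ ‖c • e x‖ - ‖e (B *ᵥ x)‖ := by
        rw [hcs]; have := norm_nonneg (e x); linarith [hBx]
    _ ≤ ‖c • e x + e (B *ᵥ x)‖ := htri

end Aux

/-- from a rigid 0/1 matrix `B`, the matrix `A = (n/ε)·I + B` has a sparse
`(2ε, S_p)`-norm approximation for any `p > 0`, has full rank, and every `(ε₁, S_0)`-norm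
approximation of it (i.e. rank approximation) has at least `ε₂·n² − n` nonzeros. -/
theorem stmt19 (p : ℝ) (hp : 0 < p) (ε ε₁ ε₂ : ℝ) (hε0 : 0 < ε) (hε : ε ≤ 1 / 2)
    (hε₁ : 0 < ε₁) (hε₂ : 0 < ε₂) (n : ℕ)
    (B : Matrix (Fin n) (Fin n) ℝ) (hB : ∀ i j, B i j = 0 ∨ B i j = 1)
    (hrigid : ∀ S : Matrix (Fin n) (Fin n) ℝ,
      (nnz S : ℝ) < ε₂ * (n : ℝ) ^ 2 → ε₁ * n < ((B - S).rank : ℝ))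
    (A : Matrix (Fin n) (Fin n) ℝ) (hA : A = ((n : ℝ) / ε) • 1 + B) :
    schattenF p (A - ((n : ℝ) / ε) • 1) ≤ 2 * ε * schattenF p A ∧
    nnz (((n : ℝ) / ε) • (1 : Matrix (Fin n) (Fin n) ℝ)) = n ∧
    A.rank = n ∧
    ∀ At : Matrix (Fin n) (Fin n) ℝ,
      ((A - At).rank : ℝ) ≤ ε₁ * (A.rank : ℝ) →
      ε₂ * (n : ℝ) ^ 2 - n ≤ (nnz At : ℝ) := by
  set c : ℝ := (n : ℝ) / ε with hcdef
  have hn0 : (0 : ℝ) ≤ n := Nat.cast_nonneg n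
  have hεne : ε ≠ 0 := ne_of_gt hε0
  have hεc : ε * c = (n : ℝ) := by rw [hcdef]; field_simp
  have hc2n : 2 * (n : ℝ) ≤ c := by
    rw [hcdef, le_div_iff₀ hε0]; nlinarith
  have hcn : (n : ℝ) ≤ c := by linarith
  have hBA : A - c • (1 : Matrix (Fin n) (Fin n) ℝ) = B := by
    rw [hA]; abel
  -- singular value bounds
  have hsB : ∀ j, singVals B j ≤ (n : ℝ) := fun j =>
    singVals_le_of_bound _ _ (bnorm_le B hB) j
  have hsA : ∀ j, c - (n : ℝ) ≤ singVals A j := fun j => by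
    rw [hA]; exact le_singVals_of_bound _ _ (anorm_ge c hcn B hB) j
  have hsAnn : ∀ j, 0 ≤ singVals A j := fun j => Real.sqrt_nonneg _
  have hsBnn : ∀ j, 0 ≤ singVals B j := fun j => Real.sqrt_nonneg _
  have hkey : ∀ j, singVals B j ≤ 2 * ε * singVals A j := by
    intro j
    have h1 : (n : ℝ) ≤ 2 * ε * (c - n) := by nlinarith
    have h2 : 2 * ε * (c - n) ≤ 2 * ε * singVals A j :=
      mul_le_mul_of_nonneg_left (hsA j) (by linarith)
    linarith [hsB j]
  -- rank
  have hrank : A.rank = n := by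
    rcases Nat.eq_zero_or_pos n with hn | hn
    · subst hn
      exact Nat.le_zero.mp (by simpa using Matrix.rank_le_card_width A)
    · have hnpos : (0 : ℝ) < n := by exact_mod_cast hn
      have hinj : Function.Injective A.mulVec := by
        intro x y hxy
        by_contra hne
        have hxy0 : x - y ≠ 0 := sub_ne_zero_of_ne hne
        have hd : A *ᵥ (x - y) = 0 := by
          rw [Matrix.mulVec_sub, hxy, sub_self]
        have h1 : (c - n) * Real.sqrt (∑ i, (x - y) i ^ 2) ≤ 0 := by
          have := anorm_ge c hcn B hB (x - y)
          rw [← hA, hd] at this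
          simpa using this
        have hpos := sqrt_sum_sq_pos hxy0
        nlinarith
      rw [Matrix.rank_of_isUnit A (Matrix.mulVec_injective_iff_isUnit.mp hinj),
        Fintype.card_fin]
  refine ⟨?_, ?_, hrank, ?_⟩
  · -- Schatten norm bound
    rw [hBA]
    unfold schattenF
    have hsumBnn : 0 ≤ ∑ j, singVals B j ^ p :=
      Finset.sum_nonneg fun j _ => Real.rpow_nonneg (hsBnn j) p
    have hsumAnn : 0 ≤ ∑ j, singVals A j ^ p :=
      Finset.sum_nonneg fun j _ => Real.rpow_nonneg (hsAnn j) p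
    have h2ε : (0 : ℝ) ≤ 2 * ε := by linarith
    have hsum : ∑ j, singVals B j ^ p ≤ (2 * ε) ^ p * ∑ j, singVals A j ^ p := by
      rw [Finset.mul_sum]
      refine Finset.sum_le_sum fun j _ => ?_
      rw [← Real.mul_rpow h2ε (hsAnn j)]
      exact Real.rpow_le_rpow (hsBnn j) (hkey j) hp.le
    calc (∑ j, singVals B j ^ p) ^ (1 / p)
        ≤ ((2 * ε) ^ p * ∑ j, singVals A j ^ p) ^ (1 / p) :=
          Real.rpow_le_rpow hsumBnn hsum (by positivity)
      _ = 2 * ε * (∑ j, singVals A j ^ p) ^ (1 / p) := by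
          rw [Real.mul_rpow (Real.rpow_nonneg h2ε p) hsumAnn, ← Real.rpow_mul h2ε,
            mul_one_div_cancel (ne_of_gt hp), Real.rpow_one]
  · -- nnz of the diagonal matrix
    rcases Nat.eq_zero_or_pos n with hn | hn
    · subst hn; simp [nnz]
    · have hc0 : c ≠ 0 := by
        have : (0 : ℝ) < n := by exact_mod_cast hn
        rw [hcdef]; positivity
      unfold nnz
      have himg : (Finset.univ.filter fun ij : Fin n × Fin n =>
          (c • (1 : Matrix (Fin n) (Fin n) ℝ)) ij.1 ij.2 ≠ 0)
          = Finset.univ.image fun i => (i, i) := by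
        ext ⟨i, j⟩
        simp only [Finset.mem_filter, Finset.mem_univ, true_and, Finset.mem_image,
          Matrix.smul_apply, Matrix.one_apply, smul_eq_mul, mul_ite, mul_one, mul_zero,
          Prod.mk.injEq]
        constructor
        · intro h
          by_cases hij : i = j
          · exact ⟨i, rfl, hij⟩
          · simp [hij] at h
        · rintro ⟨a, rfl, rfl⟩
          simp [hc0]
      rw [himg, Finset.card_image_of_injective _ (fun a b h => (Prod.ext_iff.mp h).1)]
      simp
  · -- sparsity of rank approximations
    intro At hAt
    set S : Matrix (Fin n) (Fin n) ℝ := At - c • (1 : Matrix (Fin n) (Fin n) ℝ) with hSdef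
    have hBS : B - S = A - At := by rw [hSdef, hA]; abel
    have hcard : nnz S ≤ nnz At + n := by
      unfold nnz
      have hsub : (Finset.univ.filter fun ij : Fin n × Fin n => S ij.1 ij.2 ≠ 0) ⊆
          (Finset.univ.filter fun ij : Fin n × Fin n => At ij.1 ij.2 ≠ 0) ∪
            Finset.univ.image fun i => (i, i) := by
        rintro ⟨i, j⟩ hij
        rw [Finset.mem_filter] at hij
        rw [Finset.mem_union, Finset.mem_filter, Finset.mem_image]
        by_cases hAt0 : At i j = 0
        · right
          refine ⟨i, Finset.mem_univ i, ?_⟩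
          by_contra hne
          have hij' : i ≠ j := fun h => hne (by rw [h])
          apply hij.2
          rw [hSdef]
          simp [Matrix.sub_apply, Matrix.smul_apply, Matrix.one_apply, hij', hAt0]
        · exact Or.inl ⟨Finset.mem_univ _, hAt0⟩
      calc (Finset.univ.filter fun ij : Fin n × Fin n => S ij.1 ij.2 ≠ 0).card
          ≤ ((Finset.univ.filter fun ij : Fin n × Fin n => At ij.1 ij.2 ≠ 0) ∪
              Finset.univ.image fun i => (i, i)).card := Finset.card_le_card hsub
        _ ≤ (Finset.univ.filter fun ij : Fin n × Fin n => At ij.1 ij.2 ≠ 0).card +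
              (Finset.univ.image fun i : Fin n => (i, i)).card := Finset.card_union_le _ _
        _ ≤ (Finset.univ.filter fun ij : Fin n × Fin n => At ij.1 ij.2 ≠ 0).card + n := by
            have := Finset.card_image_le (s := (Finset.univ : Finset (Fin n)))
              (f := fun i => (i, i))
            simp only [Finset.card_univ, Fintype.card_fin] at this
            omega
    have hnot : ¬ ((nnz S : ℝ) < ε₂ * (n : ℝ) ^ 2) := by
      intro h
      have h2 := hrigid S h
      rw [hBS] at h2
      rw [hrank] at hAt
      linarith
    push_neg at hnot
    have hcast : (nnz S : ℝ) ≤ (nnz At : ℝ) + n := by exact_mod_cast hcard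
    linarith
end
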